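/- arXiv:1909.04439 — 4 statements merged into one kernel-verified Lean document; each statement's English description precedes it below -/
import Mathlib

section
/- For every initial configuration X^0 ∈ ℝ^N there exists exactly one C¹ solution x : [0,∞) → ℝ^N of the first-order singular Cucker–Smale system with x(0) = X^0; i.e., a C¹ solution exists, and any two C¹ solutions of the system with the same initial data coincide for all t ≥ 0. -/
open Real Filter Set
open scoped NNReal Topology

/-- The interaction function `Ψ(x) = sign(x)·|x|^{1−β}/(1−β)`. -/
noncomputable def psiCS (β y : ℝ) : ℝ := Real.sign y * |y| ^ (1 - β) / (1 - β)

section Psi1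


section Psi

variable {β : ℝ} (hβ0 : 0 < β) (hβ1 : β < 1)

lemma psi_zero : psiCS β 0 = 0 := by simp [psiCS]

lemma psi_neg (y : ℝ) : psiCS β (-y) = -psiCS β y := by
  simp only [psiCS, Real.sign_neg, abs_neg]; ring

lemma psi_of_nonneg (hβ1 : β < 1) {y : ℝ} (hy : 0 ≤ y) :
    psiCS β y = y ^ (1 - β) / (1 - β) := by
  rcases hy.eq_or_lt with rfl | hy
  · simp [psiCS, Real.zero_rpow (by linarith : (1:ℝ) - β ≠ 0)]
  · rw [psiCS, Real.sign_of_pos hy, abs_of_pos hy, one_mul]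

lemma abs_psi_le (hβ1 : β < 1) (y : ℝ) : |psiCS β y| ≤ |y| ^ (1 - β) / (1 - β) := by
  have h1 : (0:ℝ) < 1 - β := by linarith
  rw [psiCS, abs_div, abs_of_pos h1, abs_mul, abs_of_nonneg (Real.rpow_nonneg (abs_nonneg y) _)]
  have hs : |Real.sign y| ≤ 1 := by
    rcases Real.sign_apply_eq y with h | h | h <;> simp [h]
  calc |Real.sign y| * |y| ^ (1 - β) / (1 - β) ≤ 1 * |y| ^ (1 - β) / (1 - β) := by
        gcongr <;> first | positivity | exact hs
    _ = |y| ^ (1 - β) / (1 - β) := by rw [one_mul]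

/-- monotone + odd on `[0,∞)` implies monotone. -/
lemma mono_of_odd {f : ℝ → ℝ} (hodd : ∀ y, f (-y) = -f y)
    (h : MonotoneOn f (Ici 0)) : Monotone f := by
  have h0 : f 0 = 0 := by have := hodd 0; simp at this; linarith
  have hval : ∀ y, f y = -f (-y) := fun y => by rw [hodd]; ring
  intro a b hab
  rcases le_total 0 a with ha | ha
  · exact h ha (le_trans ha hab) hab
  · rcases le_total 0 b with hb | hb
    · have h1 : f a ≤ 0 := by
        rw [hval a]
        simp only [neg_nonpos]
        rw [← h0]
        exact h (mem_Ici.2 le_rfl) (mem_Ici.2 (neg_nonneg.2 ha)) (neg_nonneg.2 ha)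
      have h2 : 0 ≤ f b := by rw [← h0]; exact h (mem_Ici.2 le_rfl) hb hb
      linarith
    · rw [hval a, hval b]
      have := h (mem_Ici.2 (neg_nonneg.2 hb)) (mem_Ici.2 (neg_nonneg.2 ha)) (by linarith)
      linarith

lemma psi_monoOn (hβ0 : 0 < β) (hβ1 : β < 1) : MonotoneOn (psiCS β) (Ici 0) := by
  intro a ha b hb hab
  rw [psi_of_nonneg hβ1 ha, psi_of_nonneg hβ1 hb]
  gcongr

lemma psi_mono (hβ0 : 0 < β) (hβ1 : β < 1) : Monotone (psiCS β) :=
  mono_of_odd (psi_neg) (psi_monoOn hβ0 hβ1)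

lemma psi_cont (hβ0 : 0 < β) (hβ1 : β < 1) : Continuous (psiCS β) := by
  have h1 : (0:ℝ) < 1 - β := by linarith
  have hpos : ∀ y : ℝ, 0 < y → ContinuousAt (psiCS β) y := by
    intro y hy
    have : ContinuousAt (fun z : ℝ => z ^ (1 - β) / (1 - β)) y :=
      (Real.continuousAt_rpow_const y _ (Or.inl (ne_of_gt hy))).div_const _
    refine this.congr ?_
    filter_upwards [eventually_gt_nhds hy] with z hz
    exact (psi_of_nonneg hβ1 hz.le).symm
  refine continuous_iff_continuousAt.2 fun y => ?_
  rcases lt_trichotomy y 0 with hy | rfl | hy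
  · have : psiCS β = fun z => -psiCS β (-z) := by
      funext z; rw [psi_neg]; ring
    rw [this]
    exact ((hpos (-y) (by linarith)).comp (continuousAt_neg)).neg
  · rw [ContinuousAt, psi_zero]
    apply squeeze_zero_norm (fun z => abs_psi_le hβ1 z)
    have hc : ContinuousAt (fun z : ℝ => |z| ^ (1 - β) / (1 - β)) 0 := by
      apply ContinuousAt.div_const
      exact ContinuousAt.comp (g := fun z : ℝ => z ^ (1 - β))
        (by simpa using Real.continuousAt_rpow_const 0 _ (Or.inr h1.le))
        continuous_abs.continuousAt
    have h0 : |(0:ℝ)| ^ (1 - β) / (1 - β) = 0 := by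
      simp [Real.zero_rpow (ne_of_gt h1)]
    rw [ContinuousAt, h0] at hc
    exact hc
  · exact hpos y hy

end Psi
end Psi1


section S2
variable {β : ℝ}
/-- Lipschitz regularization of `psiCS`. -/
noncomputable def slA (β δ : ℝ) : ℝ := δ ^ (-β) / (1 - β)

noncomputable def psiA (β δ y : ℝ) : ℝ :=
  if |y| < δ then slA β δ * y else psiCS β y

lemma slA_pos (hβ1 : β < 1) {δ : ℝ} (hδ : 0 < δ) : 0 < slA β δ :=
  div_pos (Real.rpow_pos_of_pos hδ _) (by linarith)

lemma slA_mul_self (hβ1 : β < 1) {δ : ℝ} (hδ : 0 < δ) :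
    slA β δ * δ = δ ^ (1 - β) / (1 - β) := by
  rw [slA, div_mul_eq_mul_div, ← Real.rpow_add_one (ne_of_gt hδ)]
  ring_nf

lemma psi_hasDerivAt (hβ1 : β < 1) {y : ℝ} (hy : 0 < y) :
    HasDerivAt (psiCS β) (y ^ (-β)) y := by
  have h1 : (1:ℝ) - β ≠ 0 := by linarith
  have h : HasDerivAt (fun z : ℝ => z ^ (1 - β) / (1 - β))
      ((1 - β) * y ^ (1 - β - 1) / (1 - β)) y :=
    (Real.hasDerivAt_rpow_const (Or.inl (ne_of_gt hy))).div_const _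
  have h2 : (1 - β) * y ^ (1 - β - 1) / (1 - β) = y ^ (-β) := by
    rw [mul_comm, mul_div_assoc, div_self h1, mul_one]
    norm_num
  rw [h2] at h
  refine h.congr_of_eventuallyEq ?_
  filter_upwards [eventually_gt_nhds hy] with z hz
  exact psi_of_nonneg hβ1 hz.le

lemma g2_monoOn (hβ0 : 0 < β) (hβ1 : β < 1) {δ : ℝ} (hδ : 0 < δ) :
    MonotoneOn (fun y => slA β δ * y - psiCS β y) (Ici δ) := by
  have h1 : (0:ℝ) < 1 - β := by linarith
  apply monotoneOn_of_deriv_nonneg (convex_Ici δ)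
  · exact ((continuous_const.mul continuous_id).sub (psi_cont hβ0 hβ1)).continuousOn
  · intro y hy
    rw [interior_Ici] at hy
    have hy' : 0 < y := lt_trans hδ hy
    exact (((hasDerivAt_id y).const_mul (slA β δ)).sub (psi_hasDerivAt hβ1 hy')).differentiableAt.differentiableWithinAt
  · intro y hy
    rw [interior_Ici] at hy
    have hy' : 0 < y := lt_trans hδ hy
    have hd : HasDerivAt (fun y => slA β δ * y - psiCS β y) (slA β δ * 1 - y ^ (-β)) y :=
      ((hasDerivAt_id y).const_mul (slA β δ)).sub (psi_hasDerivAt hβ1 hy')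
    rw [hd.deriv]
    have h2 : y ^ (-β) ≤ δ ^ (-β) :=
      Real.rpow_le_rpow_of_nonpos hδ hy.le (by linarith)
    have h3 : δ ^ (-β) ≤ slA β δ := by
      rw [slA, le_div_iff₀ h1]
      nlinarith [Real.rpow_pos_of_pos hδ (-β)]
    simp only [mul_one]
    linarith

lemma psiA_odd {δ : ℝ} (y : ℝ) : psiA β δ (-y) = -psiA β δ y := by
  simp only [psiA, abs_neg]
  split
  · ring
  · exact psi_neg y

lemma psiA_eq_of_le {δ y : ℝ} (h : δ ≤ |y|) : psiA β δ y = psiCS β y := by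
  rw [psiA, if_neg (not_lt.2 h)]

lemma psiA_monoOn (hβ0 : 0 < β) (hβ1 : β < 1) {δ : ℝ} (hδ : 0 < δ) :
    MonotoneOn (psiA β δ) (Ici 0) := by
  have hL := slA_pos hβ1 hδ
  have hbd : slA β δ * δ = psiCS β δ := by
    rw [slA_mul_self hβ1 hδ, psi_of_nonneg hβ1 hδ.le]
  intro a ha b hb hab
  simp only [mem_Ici] at ha hb
  rcases lt_or_ge b δ with hbδ | hbδ
  · have haδ : a < δ := lt_of_le_of_lt hab hbδ
    rw [psiA, if_pos (by rwa [abs_of_nonneg ha]), psiA, if_pos (by rwa [abs_of_nonneg hb])]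
    nlinarith [hL]
  · rcases lt_or_ge a δ with haδ | haδ
    · rw [psiA, if_pos (by rwa [abs_of_nonneg ha]), psiA_eq_of_le (by rwa [abs_of_nonneg hb])]
      calc slA β δ * a ≤ slA β δ * δ := by nlinarith
        _ = psiCS β δ := hbd
        _ ≤ psiCS β b := psi_mono hβ0 hβ1 hbδ
    · rw [psiA_eq_of_le (by rwa [abs_of_nonneg ha]), psiA_eq_of_le (by rwa [abs_of_nonneg hb])]
      exact psi_mono hβ0 hβ1 hab

lemma psiA_mono (hβ0 : 0 < β) (hβ1 : β < 1) {δ : ℝ} (hδ : 0 < δ) :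
    Monotone (psiA β δ) :=
  mono_of_odd psiA_odd (psiA_monoOn hβ0 hβ1 hδ)

lemma psiA_slope_monoOn (hβ0 : 0 < β) (hβ1 : β < 1) {δ : ℝ} (hδ : 0 < δ) :
    Monotone (fun y => slA β δ * y - psiA β δ y) := by
  apply mono_of_odd
  · intro y; rw [psiA_odd]; ring
  · intro a ha b hb hab
    simp only [mem_Ici] at ha hb
    have hg2 := g2_monoOn hβ0 hβ1 hδ
    have hδδ : slA β δ * δ - psiCS β δ = 0 := by
      rw [slA_mul_self hβ1 hδ, psi_of_nonneg hβ1 hδ.le, sub_self]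
    dsimp only
    rcases lt_or_ge b δ with hbδ | hbδ
    · have haδ : a < δ := lt_of_le_of_lt hab hbδ
      rw [psiA, if_pos (show |a| < δ by rwa [abs_of_nonneg ha]),
        psiA, if_pos (show |b| < δ by rwa [abs_of_nonneg hb])]
      simp
    · rcases lt_or_ge a δ with haδ | haδ
      · rw [psiA, if_pos (show |a| < δ by rwa [abs_of_nonneg ha]),
          psiA, if_neg (not_lt.2 (show δ ≤ |b| by rwa [abs_of_nonneg hb]))]
        have h2 := hg2 (mem_Ici.2 (le_refl δ)) (mem_Ici.2 hbδ) hbδ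
        dsimp only at h2
        calc slA β δ * a - slA β δ * a = 0 := sub_self _
          _ = slA β δ * δ - psiCS β δ := hδδ.symm
          _ ≤ slA β δ * b - psiCS β b := h2
      · rw [psiA_eq_of_le (show δ ≤ |a| by rwa [abs_of_nonneg ha]),
          psiA_eq_of_le (show δ ≤ |b| by rwa [abs_of_nonneg hb])]
        exact hg2 (mem_Ici.2 haδ) (mem_Ici.2 hbδ) hab

lemma psiA_lipschitz (hβ0 : 0 < β) (hβ1 : β < 1) {δ : ℝ} (hδ : 0 < δ) (a b : ℝ) :
    |psiA β δ a - psiA β δ b| ≤ slA β δ * |a - b| := by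
  have key : ∀ u v : ℝ, u ≤ v → |psiA β δ v - psiA β δ u| ≤ slA β δ * |v - u| := by
    intro u v huv
    have h1 : psiA β δ u ≤ psiA β δ v := psiA_mono hβ0 hβ1 hδ huv
    have h2 := psiA_slope_monoOn hβ0 hβ1 hδ huv
    dsimp only at h2
    rw [abs_of_nonneg (by linarith), abs_of_nonneg (by linarith)]
    linarith
  rcases le_total a b with h | h
  · rw [abs_sub_comm, abs_sub_comm a b]; exact key a b h
  · exact key b a h

lemma psiA_close (hβ0 : 0 < β) (hβ1 : β < 1) {δ : ℝ} (hδ : 0 < δ) (y : ℝ) :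
    |psiA β δ y - psiCS β y| ≤ 2 * (δ ^ (1 - β) / (1 - β)) := by
  have h1 : (0:ℝ) < 1 - β := by linarith
  have hη : 0 ≤ δ ^ (1 - β) / (1 - β) := by positivity
  rcases lt_or_ge (|y|) δ with hy | hy
  · have hA : |psiA β δ y| ≤ δ ^ (1 - β) / (1 - β) := by
      rw [psiA, if_pos hy, abs_mul, abs_of_pos (slA_pos hβ1 hδ)]
      calc slA β δ * |y| ≤ slA β δ * δ := by
            have := slA_pos hβ1 hδ; nlinarith
        _ = δ ^ (1 - β) / (1 - β) := slA_mul_self hβ1 hδ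
    have hP : |psiCS β y| ≤ δ ^ (1 - β) / (1 - β) := by
      refine le_trans (abs_psi_le hβ1 y) ?_
      gcongr <;> first | exact abs_nonneg y | linarith | exact hy.le
    have habs : |psiA β δ y - psiCS β y| ≤ |psiA β δ y| + |psiCS β y| := by
      rw [sub_eq_add_neg]
      exact (abs_add_le _ _).trans (by rw [abs_neg])
    linarith
  · rw [psiA_eq_of_le hy, sub_self, abs_zero]; positivity

end S2



section GlobalFlow

variable {E : Type*} [NormedAddCommGroup E] [NormedSpace ℝ E] [CompleteSpace E]

lemma hasDerivWithinAt_singleton (f : ℝ → E) (d : E) (x : ℝ) :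
    HasDerivWithinAt f d {x} x := by
  rw [hasDerivWithinAt_iff_isLittleO, nhdsWithin_singleton, Asymptotics.isLittleO_pure]
  simp

lemma hasDerivWithinAt_of_nmem_closure {f : ℝ → E} {d : E} {s : Set ℝ} {x : ℝ}
    (h : x ∉ closure s) : HasDerivWithinAt f d s x := by
  have := (HasFDerivWithinAt.of_notMem_closure (f := f)
    (f' := ContinuousLinearMap.smulRight (1 : ℝ →L[ℝ] ℝ) d) h).hasDerivWithinAt
  simpa using this

/-- One Picard–Lindelöf step of uniform length for a globally Lipschitz field. -/
lemma pl_step {F : E → E} {K : ℝ≥0} (hF : LipschitzWith K F) (a : E) (T : ℝ) :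
    ∃ g : ℝ → E, g T = a ∧ ∀ t ∈ Icc T (T + 1/((K:ℝ)+1)),
      HasDerivWithinAt g (F (g t)) (Icc T (T + 1/((K:ℝ)+1))) t := by
  have hK1 : (0:ℝ) < (K:ℝ) + 1 := by positivity
  have hh0 : (0:ℝ) < 1/((K:ℝ)+1) := by positivity
  have hpl : IsPicardLindelof (fun _ : ℝ => F) (tmin := T) (tmax := T + 1/((K:ℝ)+1))
      ⟨T, ⟨le_rfl, by linarith⟩⟩ a (‖F a‖₊ + 1) 0 ((K+1) * (‖F a‖₊ + 1)) K := by
    apply IsPicardLindelof.of_time_independent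
    · intro x hx
      have h1 : ‖F x - F a‖ ≤ (K:ℝ) * (‖F a‖ + 1) := by
        have := hF.dist_le_mul x a
        rw [dist_eq_norm] at this
        refine this.trans ?_
        have hxa : dist x a ≤ ‖F a‖ + 1 := by simpa using Metric.mem_closedBall.1 hx
        exact mul_le_mul_of_nonneg_left hxa (K.coe_nonneg)
      push_cast
      calc ‖F x‖ = ‖F a + (F x - F a)‖ := by rw [add_sub_cancel]
        _ ≤ ‖F a‖ + ‖F x - F a‖ := norm_add_le _ _
        _ ≤ ‖F a‖ + (K:ℝ) * (‖F a‖ + 1) := by linarith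
        _ ≤ ((K:ℝ)+1) * (‖F a‖ + 1) := by nlinarith [norm_nonneg (F a), K.coe_nonneg]
    · exact hF.lipschitzOnWith
    · push_cast
      rw [add_sub_cancel_left, sub_self, max_eq_left hh0.le, sub_zero]
      rw [mul_comm ((K:ℝ)+1), mul_assoc]
      rw [mul_one_div, div_self (ne_of_gt hK1), mul_one]
  obtain ⟨g, hg1, hg2⟩ := hpl.exists_eq_forall_mem_Icc_hasDerivWithinAt₀
  exact ⟨g, hg1, fun t ht => hg2 t ht⟩

/-- Global forward existence for a globally Lipschitz vector field. -/
lemma global_flow {F : E → E} {K : ℝ≥0} (hF : LipschitzWith K F) (x₀ : E) :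
    ∃ f : ℝ → E, f 0 = x₀ ∧ ∀ t ∈ Ici (0:ℝ), HasDerivWithinAt f (F (f t)) (Ici 0) t := by
  classical
  set h : ℝ := 1/((K:ℝ)+1) with hh
  have hh0 : (0:ℝ) < h := by positivity
  choose g hg1 hg2 using pl_step hF
  set sol : ℕ → ℝ → E := fun n => Nat.rec (fun _ => x₀)
    (fun k f => fun t => if t ≤ (k:ℝ)*h then f t else g (f ((k:ℝ)*h)) ((k:ℝ)*h) t) n with hsol
  have sol_succ : ∀ (k : ℕ) (t : ℝ), sol (k+1) t =
      if t ≤ (k:ℝ)*h then sol k t else g (sol k ((k:ℝ)*h)) ((k:ℝ)*h) t := fun k t => rfl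
  have compat : ∀ k m : ℕ, k ≤ m → ∀ t : ℝ, t ≤ (k:ℝ)*h → sol m t = sol k t := by
    intro k m hkm
    induction m, hkm using Nat.le_induction with
    | base => intro t _; rfl
    | succ m hkm ih =>
      intro t ht
      rw [sol_succ, if_pos, ih t ht]
      calc t ≤ (k:ℝ)*h := ht
        _ ≤ (m:ℝ)*h := by
          have : (k:ℝ) ≤ (m:ℝ) := Nat.cast_le.2 hkm
          nlinarith
  have Q : ∀ k : ℕ, sol k 0 = x₀ ∧ ∀ t ∈ Icc (0:ℝ) ((k:ℝ)*h),
      HasDerivWithinAt (sol k) (F (sol k t)) (Icc (0:ℝ) ((k:ℝ)*h)) t := by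
    intro k
    induction k with
    | zero =>
      refine ⟨rfl, ?_⟩
      intro t ht
      simp only [Nat.cast_zero, zero_mul, Icc_self] at ht ⊢
      rw [mem_singleton_iff] at ht
      subst ht
      exact hasDerivWithinAt_singleton _ _ _
    | succ k ih =>
      obtain ⟨ih0, ihD⟩ := ih
      set T : ℝ := (k:ℝ)*h with hT
      have hT0 : 0 ≤ T := by positivity
      have hTh : T ≤ T + h := by linarith
      have hcast : ((k+1:ℕ):ℝ)*h = T + h := by push_cast; ring
      set a : E := sol k T with ha
      have zf : ∀ t ≤ T, sol (k+1) t = sol k t := fun t ht => by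
        rw [sol_succ, if_pos ht]
      have zg : ∀ t ∈ Icc T (T+h), sol (k+1) t = g a T t := by
        intro t ht
        rw [sol_succ]
        split
        · have : t = T := le_antisymm (by assumption) ht.1
          rw [this, hg1 a T]
        · rfl
      constructor
      · rw [zf 0 hT0, ih0]
      · intro t ht
        rw [hcast] at ht ⊢
        have hunion : Icc (0:ℝ) T ∪ Icc T (T+h) = Icc (0:ℝ) (T+h) :=
          Icc_union_Icc_eq_Icc hT0 hTh
        have d1 : HasDerivWithinAt (sol (k+1)) (F (sol (k+1) t)) (Icc 0 T) t := by
          by_cases hmem : t ∈ Icc (0:ℝ) T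
          · have := (ihD t hmem).congr (fun s hs => zf s hs.2) (zf t hmem.2)
            rwa [zf t hmem.2]
          · exact hasDerivWithinAt_of_nmem_closure (by rwa [closure_Icc])
        have d2 : HasDerivWithinAt (sol (k+1)) (F (sol (k+1) t)) (Icc T (T+h)) t := by
          by_cases hmem : t ∈ Icc T (T+h)
          · have := (hg2 a T t hmem).congr (fun s hs => zg s hs) (zg t hmem)
            rwa [zg t hmem]
          · exact hasDerivWithinAt_of_nmem_closure (by rwa [closure_Icc])
        have := d1.union d2
        rwa [hunion] at this
  -- the global solution
  set m : ℝ → ℕ := fun t => ⌈(max t 0) / h⌉₊ + 1 with hm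
  set f : ℝ → E := fun t => sol (m t) t with hf
  have hle : ∀ s : ℝ, 0 ≤ s → s ≤ ((m s : ℝ))*h := by
    intro s hs
    have h1 : s / h ≤ ⌈s / h⌉₊ := Nat.le_ceil _
    have : (m s : ℝ) = ⌈(max s 0) / h⌉₊ + 1 := by push_cast [hm]; ring
    rw [this, max_eq_left hs]
    have h2 : s / h * h = s := div_mul_cancel₀ s (ne_of_gt hh0)
    nlinarith
  have hlt : ∀ s : ℝ, 0 ≤ s → s < ((m s : ℝ))*h := by
    intro s hs
    have h1 : s / h ≤ ⌈s / h⌉₊ := Nat.le_ceil _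
    have : (m s : ℝ) = ⌈(max s 0) / h⌉₊ + 1 := by push_cast [hm]; ring
    rw [this, max_eq_left hs]
    have h2 : s / h * h = s := div_mul_cancel₀ s (ne_of_gt hh0)
    nlinarith
  have hagree : ∀ k : ℕ, ∀ s ∈ Icc (0:ℝ) ((k:ℝ)*h), f s = sol k s := by
    intro k s hs
    rcases le_total k (m s) with hk | hk
    · exact compat k (m s) hk s hs.2
    · exact (compat (m s) k hk s (hle s hs.1)).symm
  refine ⟨f, ?_, ?_⟩
  · show sol (m 0) 0 = x₀
    exact (Q (m 0)).1
  · intro t ht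
    rw [mem_Ici] at ht
    set k : ℕ := m t with hk
    have htk : t < (k:ℝ)*h := hlt t ht
    have htmem : t ∈ Icc (0:ℝ) ((k:ℝ)*h) := ⟨ht, htk.le⟩
    have hd : HasDerivWithinAt f (F (sol k t)) (Icc (0:ℝ) ((k:ℝ)*h)) t :=
      ((Q k).2 t htmem).congr (fun s hs => hagree k s hs) (hagree k t htmem)
    have hd' : HasDerivWithinAt f (F (f t)) (Icc (0:ℝ) ((k:ℝ)*h)) t := by
      rwa [hagree k t htmem]
    refine hd'.mono_of_mem_nhdsWithin ?_
    refine mem_of_superset (inter_mem_nhdsWithin (Ici 0) (Iio_mem_nhds htk)) ?_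
    exact fun s hs => ⟨hs.1, hs.2.le⟩

end GlobalFlow



section Diss
variable {N : ℕ}

/-- Key symmetrization inequality for monotone odd interactions. -/
lemma diss_le_zero {g : ℝ → ℝ} (hmono : Monotone g) (hodd : ∀ y, g (-y) = -g y)
    (p q : Fin N → ℝ) :
    ∑ i, ∑ k, (p i - q i) * (g (p k - p i) - g (q k - q i)) ≤ 0 := by
  set S := ∑ i, ∑ k, (p i - q i) * (g (p k - p i) - g (q k - q i)) with hS
  have hswap : S = ∑ i, ∑ k, -((p k - q k) * (g (p k - p i) - g (q k - q i))) := by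
    rw [hS, Finset.sum_comm]
    refine Finset.sum_congr rfl fun i _ => Finset.sum_congr rfl fun k _ => ?_
    have h1 : p i - p k = -(p k - p i) := by ring
    have h2 : q i - q k = -(q k - q i) := by ring
    rw [h1, h2, hodd, hodd]
    ring
  have h2S : S + S = ∑ i, ∑ k,
      (((p i - q i) - (p k - q k)) * (g (p k - p i) - g (q k - q i))) := by
    nth_rewrite 2 [hswap]
    rw [hS, ← Finset.sum_add_distrib]
    refine Finset.sum_congr rfl fun i _ => ?_
    rw [← Finset.sum_add_distrib]
    refine Finset.sum_congr rfl fun k _ => by ring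
  have hterm : ∀ i k : Fin N,
      (((p i - q i) - (p k - q k)) * (g (p k - p i) - g (q k - q i))) ≤ 0 := by
    intro i k
    set α := p k - p i
    set γ := q k - q i
    have hco : (p i - q i) - (p k - q k) = -(α - γ) := by ring
    rw [hco]
    rcases le_total α γ with h | h
    · have := hmono h; nlinarith
    · have := hmono h; nlinarith
  have : S + S ≤ 0 := by
    rw [h2S]
    apply Finset.sum_nonpos
    intro i _
    exact Finset.sum_nonpos fun k _ => hterm i k
  linarith

/-- The central comparison estimate between solutions of two approximate systems. -/
lemma W_bound (hN : 0 < N) {κ : ℝ} (hκ : 0 < κ) (ν : Fin N → ℝ)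
    {g1 g2 : ℝ → ℝ} (hmono : Monotone g1) (hodd : ∀ y, g1 (-y) = -g1 y)
    {η : ℝ} (hη : 0 ≤ η) (hg : ∀ y, |g1 y - g2 y| ≤ η)
    {u v : ℝ → Fin N → ℝ}
    (hu : ∀ i, ∀ t ≥ (0:ℝ), HasDerivWithinAt (fun s => u s i)
      (ν i + (κ / (N:ℝ)) * ∑ k, g1 (u t k - u t i)) (Ici 0) t)
    (hv : ∀ i, ∀ t ≥ (0:ℝ), HasDerivWithinAt (fun s => v s i)
      (ν i + (κ / (N:ℝ)) * ∑ k, g2 (v t k - v t i)) (Ici 0) t)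
    (h0 : u 0 = v 0) :
    ∀ t ≥ (0:ℝ), ∑ i, (u t i - v t i) * (u t i - v t i) ≤
      (N:ℝ) * (Real.exp (κ * η * t) - 1) := by
  have hNR : (0:ℝ) < (N:ℝ) := by exact_mod_cast hN
  set W : ℝ → ℝ := fun t => ∑ i, (u t i - v t i) * (u t i - v t i) with hW
  set D : ℝ → ℝ := fun t => ∑ i, 2 * (u t i - v t i) *
      ((κ / (N:ℝ)) * ∑ k, (g1 (u t k - u t i) - g2 (v t k - v t i))) with hD
  have hWd : ∀ t ≥ (0:ℝ), HasDerivWithinAt W (D t) (Ici 0) t := by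
    intro t ht
    apply HasDerivWithinAt.fun_sum
    intro i _
    have hwi : HasDerivWithinAt (fun s => u s i - v s i)
        ((κ / (N:ℝ)) * ∑ k, (g1 (u t k - u t i) - g2 (v t k - v t i))) (Ici 0) t := by
      have := ((hu i t ht).sub (hv i t ht) : HasDerivWithinAt (fun s => u s i - v s i) _ (Ici 0) t)
      refine this.congr_deriv ?_
      rw [Finset.sum_sub_distrib]
      ring
    have := (hwi.mul hwi : HasDerivWithinAt (fun s => (u s i - v s i) * (u s i - v s i)) _ (Ici 0) t)
    refine this.congr_deriv ?_
    ring
  have hDle : ∀ t ≥ (0:ℝ), D t ≤ κ * η * (W t + (N:ℝ)) := by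
    intro t ht
    have hS : ∑ i, (u t i - v t i) * (∑ k, (g1 (u t k - u t i) - g2 (v t k - v t i)))
        ≤ η / 2 * ((N:ℝ) * (W t + (N:ℝ))) := by
      have hsplit : ∀ i : Fin N, (u t i - v t i) *
          (∑ k, (g1 (u t k - u t i) - g2 (v t k - v t i)))
          = (∑ k, (u t i - v t i) * (g1 (u t k - u t i) - g1 (v t k - v t i)))
            + (∑ k, (u t i - v t i) * (g1 (v t k - v t i) - g2 (v t k - v t i))) := by
        intro i
        rw [Finset.mul_sum, ← Finset.sum_add_distrib]
        refine Finset.sum_congr rfl fun k _ => by ring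
      rw [Finset.sum_congr rfl fun i _ => hsplit i, Finset.sum_add_distrib]
      have hA : ∑ i, ∑ k, (u t i - v t i) * (g1 (u t k - u t i) - g1 (v t k - v t i)) ≤ 0 :=
        diss_le_zero hmono hodd (u t) (v t)
      have hB : ∑ i, ∑ k, (u t i - v t i) * (g1 (v t k - v t i) - g2 (v t k - v t i))
          ≤ η / 2 * ((N:ℝ) * (W t + (N:ℝ))) := by
        have hterm : ∀ i k : Fin N, (u t i - v t i) * (g1 (v t k - v t i) - g2 (v t k - v t i))
            ≤ η * ((1 + (u t i - v t i) * (u t i - v t i)) / 2) := by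
          intro i k
          have h1 : |(u t i - v t i) * (g1 (v t k - v t i) - g2 (v t k - v t i))|
              ≤ |u t i - v t i| * η := by
            rw [abs_mul]
            exact mul_le_mul_of_nonneg_left (hg _) (abs_nonneg _)
          have h2 : |u t i - v t i| ≤ (1 + (u t i - v t i) * (u t i - v t i)) / 2 := by
            nlinarith [abs_nonneg (u t i - v t i), sq_abs (u t i - v t i),
              sq_nonneg (|u t i - v t i| - 1)]
          have h3 := le_of_abs_le h1
          calc (u t i - v t i) * (g1 (v t k - v t i) - g2 (v t k - v t i))
              ≤ |u t i - v t i| * η := h3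
            _ ≤ η * ((1 + (u t i - v t i) * (u t i - v t i)) / 2) := by
                rw [mul_comm]; exact mul_le_mul_of_nonneg_left h2 hη
        calc ∑ i, ∑ k, (u t i - v t i) * (g1 (v t k - v t i) - g2 (v t k - v t i))
            ≤ ∑ i : Fin N, ∑ _k : Fin N,
              η * ((1 + (u t i - v t i) * (u t i - v t i)) / 2) := by
              refine Finset.sum_le_sum fun i _ => Finset.sum_le_sum fun k _ => hterm i k
          _ = (N:ℝ) * ∑ i, η * ((1 + (u t i - v t i) * (u t i - v t i)) / 2) := by
              rw [Finset.sum_comm]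
              simp [Finset.sum_const, Finset.card_univ, Finset.mul_sum]
          _ = η / 2 * ((N:ℝ) * (W t + (N:ℝ))) := by
              have e1 : ∑ i, (N:ℝ) * (η * ((1 + (u t i - v t i) * (u t i - v t i)) / 2))
                  = ∑ i, ((N:ℝ) * η / 2 + (N:ℝ) * η / 2 *
                    ((u t i - v t i) * (u t i - v t i))) :=
                Finset.sum_congr rfl fun i _ => by ring
              have e2 : W t = ∑ i, (u t i - v t i) * (u t i - v t i) := by
                simp only [hW]
              rw [Finset.mul_sum, e1, Finset.sum_add_distrib, Finset.sum_const, ← Finset.mul_sum, e2]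
              simp only [Finset.card_univ, Fintype.card_fin, nsmul_eq_mul]
              ring
      linarith
    have hD2 : D t = 2 * (κ / (N:ℝ)) *
        ∑ i, (u t i - v t i) * (∑ k, (g1 (u t k - u t i) - g2 (v t k - v t i))) := by
      rw [hD, Finset.mul_sum]
      refine Finset.sum_congr rfl fun i _ => by ring
    rw [hD2]
    have hκN : 0 < κ / (N:ℝ) := by positivity
    calc 2 * (κ / (N:ℝ)) * ∑ i, (u t i - v t i) *
          (∑ k, (g1 (u t k - u t i) - g2 (v t k - v t i)))
        ≤ 2 * (κ / (N:ℝ)) * (η / 2 * ((N:ℝ) * (W t + (N:ℝ)))) := by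
          exact mul_le_mul_of_nonneg_left hS (by positivity)
      _ = κ * η * (W t + (N:ℝ)) := by field_simp
  -- Gronwall via antitonicity
  set G : ℝ → ℝ := fun t => (W t + (N:ℝ)) * Real.exp (-(κ * η) * t) with hG
  have hGd : ∀ t ≥ (0:ℝ), HasDerivWithinAt G
      ((D t) * Real.exp (-(κ * η) * t) + (W t + (N:ℝ)) * (-(κ * η) * Real.exp (-(κ * η) * t)))
      (Ici 0) t := by
    intro t ht
    have he : HasDerivWithinAt (fun s => Real.exp (-(κ * η) * s))
        (-(κ * η) * Real.exp (-(κ * η) * t)) (Ici 0) t := by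
      have hlin : HasDerivAt (fun s : ℝ => -(κ * η) * s) (-(κ * η)) t := by
        have := (hasDerivAt_id t).const_mul (-(κ * η)); rw [mul_one] at this; exact this
      refine hlin.exp.hasDerivWithinAt.congr_deriv ?_
      ring
    exact ((hWd t ht).add_const (N:ℝ)).mul he
  have hmono' : AntitoneOn G (Ici 0) := by
    apply antitoneOn_of_deriv_nonpos (convex_Ici 0)
    · intro t ht
      exact ((hGd t ht).continuousWithinAt)
    · intro t ht
      rw [interior_Ici] at ht
      exact ((hGd t (le_of_lt ht)).hasDerivAt (Ici_mem_nhds ht)).differentiableAt.differentiableWithinAt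
    · intro t ht
      rw [interior_Ici] at ht
      rw [((hGd t (le_of_lt ht)).hasDerivAt (Ici_mem_nhds ht)).deriv]
      have h1 := hDle t (le_of_lt ht)
      have h2 : 0 < Real.exp (-(κ * η) * t) := Real.exp_pos _
      nlinarith
  intro t ht
  have h1 : G t ≤ G 0 := hmono' (mem_Ici.2 le_rfl) (mem_Ici.2 ht) ht
  have hW0 : W 0 = 0 := by
    simp only [hW, h0]
    simp
  simp only [hG] at h1
  rw [hW0] at h1
  simp only [mul_zero, Real.exp_zero, mul_one, zero_add] at h1
  have h2 : 0 < Real.exp (-(κ * η) * t) := Real.exp_pos _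
  have h3 : Real.exp (-(κ * η) * t) * Real.exp (κ * η * t) = 1 := by
    rw [← Real.exp_add]; ring_nf; exact Real.exp_zero
  have h4 : (W t + (N:ℝ)) ≤ (N:ℝ) * Real.exp (κ * η * t) := by
    have := mul_le_mul_of_nonneg_right h1 (le_of_lt (Real.exp_pos (κ * η * t)))
    rw [mul_assoc, h3, mul_one] at this
    linarith [this]
  have e2 : W t = ∑ i, (u t i - v t i) * (u t i - v t i) := by simp only [hW]
  rw [e2] at h4
  linarith

end Diss


section Exist
open scoped Topology

lemma div_mono_num {a b c : ℝ} (h : a ≤ b) (hc : 0 < c) : a / c ≤ b / c := by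
  rw [div_eq_mul_inv, div_eq_mul_inv]
  exact mul_le_mul_of_nonneg_right h (inv_nonneg.2 hc.le)

lemma psiA_continuous {β : ℝ} (hβ0 : 0 < β) (hβ1 : β < 1) {δ : ℝ} (hδ : 0 < δ) :
    Continuous (psiA β δ) := by
  have : LipschitzWith (slA β δ).toNNReal (psiA β δ) := by
    apply LipschitzWith.of_dist_le_mul
    intro a b
    rw [Real.dist_eq, Real.dist_eq, Real.coe_toNNReal _ (slA_pos hβ1 hδ).le]
    exact psiA_lipschitz hβ0 hβ1 hδ a b
  exact this.continuous

/-- The approximate interaction field is globally Lipschitz. -/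
lemma fld_lip {N : ℕ} (hN : 0 < N) {β κ : ℝ} (hβ0 : 0 < β) (hβ1 : β < 1) (hκ : 0 < κ)
    (ν : Fin N → ℝ) {δ : ℝ} (hδ : 0 < δ) :
    LipschitzWith (2 * κ * slA β δ).toNNReal
      (fun (x : Fin N → ℝ) (i : Fin N) => ν i + (κ / (N:ℝ)) * ∑ k, psiA β δ (x k - x i)) := by
  have hNR : (0:ℝ) < (N:ℝ) := by exact_mod_cast hN
  have hL := slA_pos hβ1 hδ
  apply LipschitzWith.of_dist_le_mul
  intro x y
  rw [Real.coe_toNNReal _ (by positivity)]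
  have hrhs : 0 ≤ 2 * κ * slA β δ * dist x y := by positivity
  rw [dist_pi_le_iff hrhs]
  intro i
  rw [Real.dist_eq]
  have h1 : (ν i + (κ / (N:ℝ)) * ∑ k, psiA β δ (x k - x i))
      - (ν i + (κ / (N:ℝ)) * ∑ k, psiA β δ (y k - y i))
      = (κ / (N:ℝ)) * ∑ k, (psiA β δ (x k - x i) - psiA β δ (y k - y i)) := by
    rw [Finset.sum_sub_distrib]; ring
  rw [h1, abs_mul, abs_of_pos (by positivity : (0:ℝ) < κ / (N:ℝ))]
  have h2 : |∑ k, (psiA β δ (x k - x i) - psiA β δ (y k - y i))|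
      ≤ ∑ _k : Fin N, 2 * slA β δ * dist x y := by
    refine (Finset.abs_sum_le_sum_abs _ _).trans (Finset.sum_le_sum fun k _ => ?_)
    refine (psiA_lipschitz hβ0 hβ1 hδ _ _).trans ?_
    have h3 : |x k - x i - (y k - y i)| ≤ dist x y + dist x y := by
      have hk : |x k - y k| ≤ dist x y := by
        rw [← Real.dist_eq]; exact dist_le_pi_dist x y k
      have hi : |x i - y i| ≤ dist x y := by
        rw [← Real.dist_eq]; exact dist_le_pi_dist x y i
      calc |x k - x i - (y k - y i)| = |(x k - y k) + -(x i - y i)| := by ring_nf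
        _ ≤ |x k - y k| + |-(x i - y i)| := abs_add_le _ _
        _ = |x k - y k| + |x i - y i| := by rw [abs_neg]
        _ ≤ dist x y + dist x y := add_le_add hk hi
    calc slA β δ * |x k - x i - (y k - y i)| ≤ slA β δ * (dist x y + dist x y) :=
          mul_le_mul_of_nonneg_left h3 hL.le
      _ = 2 * slA β δ * dist x y := by ring
  calc (κ / (N:ℝ)) * |∑ k, (psiA β δ (x k - x i) - psiA β δ (y k - y i))|
      ≤ (κ / (N:ℝ)) * ∑ _k : Fin N, 2 * slA β δ * dist x y :=
        mul_le_mul_of_nonneg_left h2 (by positivity)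
    _ = 2 * κ * slA β δ * dist x y := by
        rw [Finset.sum_const, Finset.card_univ, Fintype.card_fin, nsmul_eq_mul]
        field_simp

theorem cs_exists (N : ℕ) (hN : 0 < N) (β κ : ℝ) (hβ0 : 0 < β) (hβ1 : β < 1)
    (hκ : 0 < κ) (ν : Fin N → ℝ) (X0 : Fin N → ℝ) :
    ∃ x : ℝ → Fin N → ℝ,
      (∀ i, ContDiffOn ℝ 1 (fun t => x t i) (Ici 0)) ∧
      (∀ i, ∀ t ≥ (0:ℝ), HasDerivWithinAt (fun s => x s i)
        (ν i + (κ / (N:ℝ)) * ∑ k, psiCS β (x t k - x t i)) (Ici 0) t) ∧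
      x 0 = X0 := by
  classical
  have hNR : (0:ℝ) < (N:ℝ) := by exact_mod_cast hN
  have h1β : (0:ℝ) < 1 - β := by linarith
  -- approximation parameters
  set δ : ℕ → ℝ := fun n => 1 / ((n:ℝ) + 1) with hδdef
  have hδpos : ∀ n, 0 < δ n := fun n => by simp only [hδdef]; positivity
  set η : ℕ → ℝ := fun n => 2 * ((δ n) ^ (1 - β) / (1 - β)) with hηdef
  have hηpos : ∀ n, 0 ≤ η n := by
    intro n
    have h2 : (0:ℝ) ≤ (δ n) ^ (1 - β) := Real.rpow_nonneg (hδpos n).le _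
    simp only [hηdef]
    have h3 := div_mono_num (c := 1 - β) h2 h1β
    simp only [zero_div] at h3
    linarith
  have hηanti : ∀ {n m : ℕ}, n ≤ m → η m ≤ η n := by
    intro n m hnm
    have hd : δ m ≤ δ n := by
      simp only [hδdef]
      apply one_div_le_one_div_of_le (by positivity)
      have : (n:ℝ) ≤ (m:ℝ) := Nat.cast_le.2 hnm
      linarith
    have h6 : (δ m) ^ (1 - β) ≤ (δ n) ^ (1 - β) :=
      Real.rpow_le_rpow (hδpos m).le hd h1β.le
    simp only [hηdef]
    have := div_mono_num (c := 1 - β) h6 h1β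
    linarith
  have hη0 : Tendsto η atTop (𝓝 0) := by
    have h1 : Tendsto δ atTop (𝓝 0) := by
      rw [hδdef]; exact tendsto_one_div_add_atTop_nhds_zero_nat
    have h2 : ContinuousAt (fun a : ℝ => 2 * (a ^ (1 - β) / (1 - β))) 0 := by
      have := Real.continuousAt_rpow_const 0 (1 - β) (Or.inr h1β.le)
      exact (this.div_const _).const_mul _
    have h3 := h2.tendsto.comp h1
    simp only [Function.comp_def] at h3
    rw [Real.zero_rpow (ne_of_gt h1β)] at h3
    simp only [zero_div, mul_zero] at h3
    rw [hηdef]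
    exact h3
  -- approximate solutions
  have hex : ∀ n : ℕ, ∃ f : ℝ → Fin N → ℝ, f 0 = X0 ∧ ∀ t ∈ Ici (0:ℝ),
      HasDerivWithinAt f
        (fun i => ν i + (κ / (N:ℝ)) * ∑ k, psiA β (δ n) (f t k - f t i)) (Ici 0) t := by
    intro n
    obtain ⟨f, hf0, hfD⟩ := global_flow (fld_lip hN hβ0 hβ1 hκ ν (hδpos n)) X0
    exact ⟨f, hf0, hfD⟩
  choose sol hsol0 hsolD using hex
  have hcomp : ∀ n i, ∀ t ≥ (0:ℝ), HasDerivWithinAt (fun s => sol n s i)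
      (ν i + (κ / (N:ℝ)) * ∑ k, psiA β (δ n) (sol n t k - sol n t i)) (Ici 0) t :=
    fun n i t ht => (hasDerivWithinAt_pi.1 (hsolD n t ht)) i
  have hsolc : ∀ n i, ContinuousOn (fun s => sol n s i) (Ici 0) :=
    fun n i s hs => (hcomp n i s hs).continuousWithinAt
  -- mutual distance estimates
  have hcross : ∀ n m y, |psiA β (δ n) y - psiA β (δ m) y| ≤ η n + η m := by
    intro n m y
    have h1 := psiA_close hβ0 hβ1 (hδpos n) y
    have h2 := psiA_close hβ0 hβ1 (hδpos m) y
    calc |psiA β (δ n) y - psiA β (δ m) y|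
        = |(psiA β (δ n) y - psiCS β y) + -(psiA β (δ m) y - psiCS β y)| := by ring_nf
      _ ≤ |psiA β (δ n) y - psiCS β y| + |-(psiA β (δ m) y - psiCS β y)| := abs_add_le _ _
      _ = |psiA β (δ n) y - psiCS β y| + |psiA β (δ m) y - psiCS β y| := by rw [abs_neg]
      _ ≤ η n + η m := by
          simp only [hηdef]; exact add_le_add h1 h2
  have hW : ∀ n m : ℕ, ∀ t ≥ (0:ℝ), ∑ i, (sol n t i - sol m t i) * (sol n t i - sol m t i)
      ≤ (N:ℝ) * (Real.exp (κ * (η n + η m) * t) - 1) :=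
    fun n m => W_bound hN hκ ν (psiA_mono hβ0 hβ1 (hδpos n)) psiA_odd
      (by have := hηpos n; have := hηpos m; linarith) (hcross n m)
      (hcomp n) (hcomp m) (by rw [hsol0 n, hsol0 m])
  have habs : ∀ n m : ℕ, ∀ t ≥ (0:ℝ), ∀ i,
      |sol n t i - sol m t i| ≤ Real.sqrt ((N:ℝ) * (Real.exp (κ * (η n + η m) * t) - 1)) := by
    intro n m t ht i
    apply Real.le_sqrt_of_sq_le
    have h1 : (sol n t i - sol m t i) * (sol n t i - sol m t i)
        ≤ ∑ j, (sol n t j - sol m t j) * (sol n t j - sol m t j) :=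
      Finset.single_le_sum
        (f := fun j => (sol n t j - sol m t j) * (sol n t j - sol m t j))
        (fun j _ => mul_self_nonneg _) (Finset.mem_univ i)
    calc |sol n t i - sol m t i| ^ 2 = (sol n t i - sol m t i) * (sol n t i - sol m t i) := by
          rw [sq_abs]; ring
      _ ≤ _ := h1.trans (hW n m t ht)
  -- the uniform rate
  set B : ℕ → ℝ → ℝ := fun n T => Real.sqrt ((N:ℝ) * (Real.exp (κ * (2 * η n) * T) - 1))
    with hBdef
  have hexp_mono : ∀ {n m : ℕ}, n ≤ m → ∀ {s T : ℝ}, 0 ≤ s → s ≤ T →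
      Real.sqrt ((N:ℝ) * (Real.exp (κ * (η n + η m) * s) - 1)) ≤ B n T := by
    intro n m hnm s T hs hsT
    simp only [hBdef]
    apply Real.sqrt_le_sqrt
    have h2 := hηanti hnm
    have h3 := hηpos n
    have h1 : κ * (η n + η m) * s ≤ κ * (2 * η n) * T := by
      have e1 : κ * (η n + η m) ≤ κ * (2 * η n) :=
        mul_le_mul_of_nonneg_left (by linarith) hκ.le
      have e2 : κ * (η n + η m) * s ≤ κ * (2 * η n) * s :=
        mul_le_mul_of_nonneg_right e1 hs
      have e3 : κ * (2 * η n) * s ≤ κ * (2 * η n) * T :=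
        mul_le_mul_of_nonneg_left hsT (by positivity)
      linarith
    have := Real.exp_le_exp.2 h1
    nlinarith
  have hBmono : ∀ {n : ℕ} {T : ℝ}, 0 ≤ T → B n T ≤ B 0 T := by
    intro n T hT
    simp only [hBdef]
    apply Real.sqrt_le_sqrt
    have h2 := hηanti (Nat.zero_le n)
    have h3 := hηpos n
    have h1 : κ * (2 * η n) * T ≤ κ * (2 * η 0) * T :=
      mul_le_mul_of_nonneg_right (mul_le_mul_of_nonneg_left (by linarith) hκ.le) hT
    have := Real.exp_le_exp.2 h1
    nlinarith
  have hBnn : ∀ n T, 0 ≤ B n T := fun n T => Real.sqrt_nonneg _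
  have hBtend : ∀ T : ℝ, Tendsto (fun n => B n T) atTop (𝓝 0) := by
    intro T
    have hψ : Continuous (fun a : ℝ => Real.sqrt ((N:ℝ) * (Real.exp (κ * (2 * a) * T) - 1))) := by
      apply Real.continuous_sqrt.comp
      apply continuous_const.mul
      apply Continuous.sub _ continuous_const
      apply Real.continuous_exp.comp
      exact (continuous_const.mul (continuous_const.mul continuous_id)).mul continuous_const
    have h3 := hψ.continuousAt.tendsto.comp hη0
    simp only [Function.comp, mul_zero, zero_mul, Real.exp_zero, sub_self,
      Real.sqrt_zero] at h3
    simp only [hBdef]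
    exact h3
  -- Cauchy property and limit
  have hcauchy : ∀ t ≥ (0:ℝ), ∀ i, CauchySeq (fun n => sol n t i) := by
    intro t ht i
    apply cauchySeq_of_le_tendsto_0' (fun n => B n t)
    · intro n m hnm
      rw [Real.dist_eq]
      exact (habs n m t ht i).trans (hexp_mono hnm ht le_rfl)
    · exact hBtend t
  set x : ℝ → Fin N → ℝ := fun t i => limUnder atTop (fun n => sol n t i) with hxdef
  have hlim : ∀ t ≥ (0:ℝ), ∀ i, Tendsto (fun n => sol n t i) atTop (𝓝 (x t i)) :=
    fun t ht i => (hcauchy t ht i).tendsto_limUnder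
  have hx0 : x 0 = X0 := by
    funext i
    have h1 := hlim 0 le_rfl i
    have h2 : (fun n => sol n 0 i) = fun _ => X0 i := funext fun n => by rw [hsol0 n]
    rw [h2] at h1
    exact tendsto_nhds_unique h1 tendsto_const_nhds
  have hclose : ∀ n : ℕ, ∀ t ≥ (0:ℝ), ∀ T, t ≤ T → ∀ i,
      |sol n t i - x t i| ≤ B n T := by
    intro n t ht T hT i
    have h1 : Tendsto (fun m => |sol n t i - sol m t i|) atTop (𝓝 (|sol n t i - x t i|)) :=
      (tendsto_const_nhds.sub (hlim t ht i)).abs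
    refine le_of_tendsto h1 ?_
    filter_upwards [eventually_ge_atTop n] with m hm
    exact (habs n m t ht i).trans (hexp_mono hm ht hT)
  -- continuity of the limit
  have hxc : ∀ i, ContinuousOn (fun t => x t i) (Ici 0) := by
    intro i t0 ht0
    have hTU : TendstoUniformlyOn (fun n t => sol n t i) (fun t => x t i) atTop
        (Icc 0 (t0 + 1)) := by
      rw [Metric.tendstoUniformlyOn_iff]
      intro ε hε
      filter_upwards [(hBtend (t0 + 1)).eventually (gt_mem_nhds hε)] with n hn t htmem
      rw [dist_comm, Real.dist_eq]
      exact lt_of_le_of_lt (hclose n t htmem.1 (t0 + 1) htmem.2 i) hn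
    have hcOn : ContinuousOn (fun t => x t i) (Icc 0 (t0 + 1)) :=
      hTU.continuousOn (Eventually.of_forall fun n => (hsolc n i).mono Icc_subset_Ici_self).frequently
    refine (hcOn t0 ⟨ht0, by linarith⟩).mono_of_mem_nhdsWithin ?_
    refine mem_of_superset (inter_mem_nhdsWithin _ (Iio_mem_nhds (by linarith : t0 < t0 + 1))) ?_
    exact fun s hs => ⟨hs.1, hs.2.le⟩
  have hxvec : ContinuousOn x (Ici 0) := continuousOn_pi.2 hxc
  -- the limit field
  set G : Fin N → ℝ → ℝ := fun i s => ν i + (κ / (N:ℝ)) * ∑ k, psiCS β (x s k - x s i)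
    with hGdef
  have hGc : ∀ i, ContinuousOn (G i) (Ici 0) := by
    intro i
    apply ContinuousOn.add continuousOn_const
    apply ContinuousOn.mul continuousOn_const
    apply continuousOn_finset_sum
    intro k _
    exact (psi_cont hβ0 hβ1).comp_continuousOn ((hxc k).sub (hxc i))
  -- approximate fields, their continuity
  set Fap : ℕ → Fin N → ℝ → ℝ :=
    fun n i s => ν i + (κ / (N:ℝ)) * ∑ k, psiA β (δ n) (sol n s k - sol n s i) with hFdef
  have hFc : ∀ n i, ContinuousOn (Fap n i) (Ici 0) := by
    intro n i
    apply ContinuousOn.add continuousOn_const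
    apply ContinuousOn.mul continuousOn_const
    apply continuousOn_finset_sum
    intro k _
    exact (psiA_continuous hβ0 hβ1 (hδpos n)).comp_continuousOn
      ((hsolc n k).sub (hsolc n i))
  -- integral representation of the approximations
  have hrep : ∀ n i, ∀ t ≥ (0:ℝ),
      ∫ s in (0:ℝ)..t, Fap n i s = sol n t i - X0 i := by
    intro n i t ht
    have h := intervalIntegral.integral_eq_sub_of_hasDeriv_right_of_le ht
      (f := fun s => sol n s i) (f' := Fap n i)
      ((hsolc n i).mono Icc_subset_Ici_self)
      (fun s hs => (hcomp n i s hs.1.le).mono fun y hy => le_trans hs.1.le (le_of_lt hy))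
      (((hFc n i).mono (by rw [uIcc_of_le ht]; exact Icc_subset_Ici_self)).intervalIntegrable)
    rw [h]
    simp [hsol0 n]
  -- integral representation of the limit, via dominated convergence
  have hxrep : ∀ i, ∀ t ≥ (0:ℝ), x t i = X0 i + ∫ s in (0:ℝ)..t, G i s := by
    intro i t ht
    obtain ⟨C, hC⟩ := (isCompact_Icc (a := (0:ℝ)) (b := t)).exists_bound_of_continuousOn
      (hxvec.mono Icc_subset_Ici_self)
    have hsolbd : ∀ n, ∀ s ∈ Icc (0:ℝ) t, ∀ j, |sol n s j| ≤ C + B 0 t := by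
      intro n s hs j
      have h1 : |sol n s j - x s j| ≤ B 0 t :=
        (hclose n s hs.1 t hs.2 j).trans (hBmono (hs.1.trans hs.2))
      have h2 : |x s j| ≤ C := by
        have h3 := hC s hs
        have h4 : |x s j| ≤ ‖x s‖ := by
          rw [← Real.norm_eq_abs]; exact norm_le_pi_norm (x s) j
        linarith
      calc |sol n s j| = |(sol n s j - x s j) + x s j| := by ring_nf
        _ ≤ |sol n s j - x s j| + |x s j| := abs_add_le _ _
        _ ≤ C + B 0 t := by linarith
    set R : ℝ := 2 * (C + B 0 t) with hRdef
    have i0 : Fin N := ⟨0, hN⟩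
    have hCB : 0 ≤ C + B 0 t :=
      le_trans (abs_nonneg _) (hsolbd 0 0 ⟨le_rfl, ht⟩ i0)
    have hR0 : 0 ≤ R := by rw [hRdef]; linarith
    have hpsibd : ∀ n, ∀ s ∈ Icc (0:ℝ) t, ∀ k,
        |psiA β (δ n) (sol n s k - sol n s i)| ≤ η 0 + R ^ (1 - β) / (1 - β) := by
      intro n s hs k
      set y : ℝ := sol n s k - sol n s i with hy
      have hyR : |y| ≤ R := by
        rw [hRdef]
        calc |y| = |sol n s k + -(sol n s i)| := by rw [hy]; ring_nf
          _ ≤ |sol n s k| + |-(sol n s i)| := abs_add_le _ _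
          _ = |sol n s k| + |sol n s i| := by rw [abs_neg]
          _ ≤ 2 * (C + B 0 t) := by
              have := hsolbd n s hs k
              have := hsolbd n s hs i
              linarith
      have h1 : |psiA β (δ n) y - psiCS β y| ≤ η n := by
        have := psiA_close hβ0 hβ1 (hδpos n) y
        simp only [hηdef]
        exact this
      have h2 : |psiCS β y| ≤ R ^ (1 - β) / (1 - β) := by
        refine (abs_psi_le hβ1 y).trans (div_mono_num ?_ h1β)
        exact Real.rpow_le_rpow (abs_nonneg y) hyR h1β.le
      calc |psiA β (δ n) y| = |(psiA β (δ n) y - psiCS β y) + psiCS β y| := by ring_nf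
        _ ≤ |psiA β (δ n) y - psiCS β y| + |psiCS β y| := abs_add_le _ _
        _ ≤ η n + R ^ (1 - β) / (1 - β) := add_le_add h1 h2
        _ ≤ η 0 + R ^ (1 - β) / (1 - β) := by
            have := hηanti (Nat.zero_le n); linarith
    set Bd : ℝ := |ν i| + κ * (η 0 + R ^ (1 - β) / (1 - β)) with hBddef
    have hFbd : ∀ n, ∀ s ∈ Icc (0:ℝ) t, |Fap n i s| ≤ Bd := by
      intro n s hs
      have h1 : |∑ k, psiA β (δ n) (sol n s k - sol n s i)|
          ≤ ∑ _k : Fin N, (η 0 + R ^ (1 - β) / (1 - β)) :=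
        (Finset.abs_sum_le_sum_abs _ _).trans
          (Finset.sum_le_sum fun k _ => hpsibd n s hs k)
      rw [Finset.sum_const, Finset.card_univ, Fintype.card_fin, nsmul_eq_mul] at h1
      have h2 : |Fap n i s| ≤ |ν i| + (κ / (N:ℝ)) *
          ((N:ℝ) * (η 0 + R ^ (1 - β) / (1 - β))) := by
        simp only [hFdef]
        refine (abs_add_le _ _).trans ?_
        rw [abs_mul, abs_of_pos (by positivity : (0:ℝ) < κ / (N:ℝ))]
        exact add_le_add le_rfl (mul_le_mul_of_nonneg_left h1 (by positivity))
      rw [hBddef]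
      have h3 : (κ / (N:ℝ)) * ((N:ℝ) * (η 0 + R ^ (1 - β) / (1 - β)))
          = κ * (η 0 + R ^ (1 - β) / (1 - β)) := by
        field_simp
      linarith [h2, h3.le, h3.ge]
    have hIoc : Set.uIoc (0:ℝ) t = Ioc 0 t := uIoc_of_le ht
    have hDCT : Tendsto (fun n => ∫ s in (0:ℝ)..t, Fap n i s) atTop
        (𝓝 (∫ s in (0:ℝ)..t, G i s)) := by
      apply intervalIntegral.tendsto_integral_filter_of_dominated_convergence
        (bound := fun _ => Bd)
      · refine Eventually.of_forall fun n => ?_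
        rw [hIoc]
        exact (((hFc n i).mono (fun y hy => hy.1.le)).mono (fun y hy => hy)).aestronglyMeasurable
          measurableSet_Ioc
      · refine Eventually.of_forall fun n => ?_
        refine MeasureTheory.ae_of_all _ fun s hs => ?_
        rw [hIoc] at hs
        rw [Real.norm_eq_abs]
        exact hFbd n s (Ioc_subset_Icc_self hs)
      · exact intervalIntegrable_const
      · refine MeasureTheory.ae_of_all _ fun s hs => ?_
        rw [hIoc] at hs
        have hs0 : (0:ℝ) ≤ s := hs.1.le
        simp only [hFdef, hGdef]
        apply Tendsto.const_add
        apply Tendsto.const_mul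
        apply tendsto_finset_sum
        intro k _
        have hy : Tendsto (fun n => sol n s k - sol n s i) atTop (𝓝 (x s k - x s i)) :=
          (hlim s hs0 k).sub (hlim s hs0 i)
        have h2 : Tendsto (fun n => psiCS β (sol n s k - sol n s i)) atTop
            (𝓝 (psiCS β (x s k - x s i))) := by
          have := ((psi_cont hβ0 hβ1).continuousAt (x := x s k - x s i)).tendsto.comp hy
          simpa [Function.comp_def] using this
        have h3 : Tendsto (fun n => psiA β (δ n) (sol n s k - sol n s i)
            - psiCS β (sol n s k - sol n s i)) atTop (𝓝 0) := by
          apply squeeze_zero_norm _ hη0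
          intro n
          rw [Real.norm_eq_abs]
          have := psiA_close hβ0 hβ1 (hδpos n) (sol n s k - sol n s i)
          simp only [hηdef]
          exact this
        have h4 := h3.add h2
        rw [zero_add] at h4
        have h5 : (fun n => (psiA β (δ n) (sol n s k - sol n s i)
            - psiCS β (sol n s k - sol n s i)) + psiCS β (sol n s k - sol n s i))
            = fun n => psiA β (δ n) (sol n s k - sol n s i) := by
          funext n; ring
        rwa [h5] at h4
    have hrepfun : (fun n => ∫ s in (0:ℝ)..t, Fap n i s) = fun n => sol n t i - X0 i :=
      funext fun n => hrep n i t ht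
    rw [hrepfun] at hDCT
    have h6 : Tendsto (fun n => sol n t i - X0 i) atTop (𝓝 (x t i - X0 i)) :=
      (hlim t ht i).sub_const _
    have h7 := tendsto_nhds_unique h6 hDCT
    linarith [h7]
  -- the derivative of the limit
  have hder : ∀ i, ∀ t0 ≥ (0:ℝ), HasDerivWithinAt (fun u => x u i) (G i t0) (Ici 0) t0 := by
    intro i t0 ht0
    have hInt : ∀ b ≥ (0:ℝ), IntervalIntegrable (G i) MeasureTheory.volume 0 b := fun b hb =>
      ((hGc i).mono (by rw [uIcc_of_le hb]; exact Icc_subset_Ici_self)).intervalIntegrable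
    have hftc : HasDerivWithinAt (fun u => ∫ s in (0:ℝ)..u, G i s) (G i t0) (Ici 0) t0 := by
      rcases eq_or_lt_of_le ht0 with heq | hpos
      · obtain rfl : t0 = 0 := heq.symm
        apply intervalIntegral.integral_hasDerivWithinAt_right (s := Ici 0) (t := Ioi 0)
          (hInt 0 le_rfl)
        · refine ⟨Ioc 0 1, ?_, ?_⟩
          · refine mem_of_superset (inter_mem_nhdsWithin _ (Iio_mem_nhds one_pos)) ?_
            exact fun y hy => ⟨hy.1, hy.2.le⟩
          · exact ((hGc i).mono (fun y hy => hy.1.le)).aestronglyMeasurable measurableSet_Ioc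
        · exact ((hGc i) 0 Set.self_mem_Ici).mono (fun y hy => mem_Ici.2 (le_of_lt hy))
      · have hmeas : StronglyMeasurableAtFilter (G i) (𝓝 t0) MeasureTheory.volume := by
          refine ⟨Ioo (t0/2) (t0+1), Ioo_mem_nhds (by linarith) (by linarith), ?_⟩
          refine ((hGc i).mono (fun y hy => ?_)).aestronglyMeasurable measurableSet_Ioo
          have : t0/2 < y := hy.1
          simp only [mem_Ici]
          linarith
        have hcont : ContinuousAt (G i) t0 := (hGc i).continuousAt (Ici_mem_nhds hpos)
        exact (intervalIntegral.integral_hasDerivAt_right (hInt t0 ht0)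
          hmeas hcont).hasDerivWithinAt
    exact (hftc.const_add (X0 i)).congr (fun s hs => hxrep i s hs) (hxrep i t0 ht0)
  -- C¹ regularity
  have hCD : ∀ i, ContDiffOn ℝ 1 (fun u => x u i) (Ici 0) := by
    intro i
    have h1 : (1 : WithTop ℕ∞) = 0 + 1 := by norm_num
    rw [h1, contDiffOn_succ_iff_derivWithin (uniqueDiffOn_Ici 0)]
    refine ⟨fun s hs => (hder i s hs).differentiableWithinAt, ?_, ?_⟩
    · intro h
      simp at h
    · rw [contDiffOn_zero]
      exact (hGc i).congr fun s hs => (hder i s hs).derivWithin (uniqueDiffOn_Ici 0 s hs)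
  refine ⟨x, hCD, ?_, hx0⟩
  intro i t ht
  have := hder i t ht
  rw [hGdef] at this
  exact this

end Exist


/-- A C¹ solution on `[0,∞)` of the first-order singular Cucker–Smale system:
`x_i'(t) = ν_i + (κ/N) Σ_k Ψ(x_k(t) − x_i(t))`. -/
def IsCSSol (N : ℕ) (β κ : ℝ) (ν : Fin N → ℝ) (x : ℝ → Fin N → ℝ) : Prop :=
  (∀ i, ContDiffOn ℝ 1 (fun t => x t i) (Set.Ici 0)) ∧
  ∀ i, ∀ t ≥ (0:ℝ), HasDerivWithinAt (fun s => x s i)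
    (ν i + (κ / (N:ℝ)) * ∑ k, psiCS β (x t k - x t i)) (Set.Ici 0) t

/-- Existence and uniqueness of the C¹ solution for every initial configuration. -/
theorem stmt0 (N : ℕ) (hN : 2 ≤ N) (β κ : ℝ) (hβ0 : 0 < β) (hβ1 : β < 1)
    (hκ : 0 < κ) (ν : Fin N → ℝ) (X0 : Fin N → ℝ) :
    (∃ x : ℝ → Fin N → ℝ, IsCSSol N β κ ν x ∧ x 0 = X0) ∧
    (∀ x y : ℝ → Fin N → ℝ, IsCSSol N β κ ν x → IsCSSol N β κ ν y →
      x 0 = X0 → y 0 = X0 → ∀ t ≥ (0:ℝ), x t = y t) := by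
  have hN' : 0 < N := by omega
  constructor
  · obtain ⟨x, h1, h2, h3⟩ := cs_exists N hN' β κ hβ0 hβ1 hκ ν X0
    exact ⟨x, ⟨h1, h2⟩, h3⟩
  · intro x y hx hy hx0 hy0 t ht
    have h := W_bound hN' hκ ν (psi_mono hβ0 hβ1) psi_neg (le_refl (0:ℝ))
      (fun z => by simp) hx.2 hy.2 (by rw [hx0, hy0])
    have h2 := h t ht
    have h3 : Real.exp (κ * 0 * t) - 1 = 0 := by simp
    rw [h3, mul_zero] at h2
    funext i
    have h4 : (x t i - y t i) * (x t i - y t i) ≤ 0 := by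
      have h5 : (x t i - y t i) * (x t i - y t i)
          ≤ ∑ j, (x t j - y t j) * (x t j - y t j) :=
        Finset.single_le_sum (f := fun j => (x t j - y t j) * (x t j - y t j))
          (fun j _ => mul_self_nonneg _) (Finset.mem_univ i)
      linarith
    have h6 := mul_self_nonneg (x t i - y t i)
    have h7 : x t i - y t i = 0 := by nlinarith
    linarith
end

section
/- Let x be a C¹ solution of the first-order singular Cucker–Smale system and let i ≠ j be indices with x_i(0) < x_j(0) and ν_i < ν_j. Then the i-th and j-th particles never collide: x_i(t) ≠ x_j(t) for every t > 0 (in fact x_i(t) < x_j(t) for all t ≥ 0). -/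
open Real Filter Set

/-- If `ν_i < ν_j` and initially `x_i(0) < x_j(0)`, the two particles never collide. -/
theorem stmt1 (N : ℕ) (hN : 2 ≤ N) (β κ : ℝ) (hβ0 : 0 < β) (hβ1 : β < 1)
    (hκ : 0 < κ) (ν : Fin N → ℝ) (x : ℝ → Fin N → ℝ) (hx : IsCSSol N β κ ν x)
    (i j : Fin N) (hij : i ≠ j) (h0 : x 0 i < x 0 j) (hν : ν i < ν j) :
    (∀ t > (0:ℝ), x t i ≠ x t j) ∧ (∀ t ≥ (0:ℝ), x t i < x t j) := by
  obtain ⟨hC, hD⟩ := hx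
  set u : ℝ → ℝ := fun t => x t j - x t i with hu
  have hu0 : 0 < u 0 := by simp [hu]; linarith
  have hcont : ContinuousOn u (Ici 0) :=
    ((hC j).continuousOn).sub ((hC i).continuousOn)
  have hpos : ∀ t ≥ (0:ℝ), 0 < u t := by
    by_contra h
    push_neg at h
    obtain ⟨t₁, ht₁, hle⟩ := h
    -- the set of zeros of u in [0, t₁]
    set S : Set ℝ := Icc 0 t₁ ∩ u ⁻¹' {0} with hS
    have hcont1 : ContinuousOn u (Icc 0 t₁) := hcont.mono (Icc_subset_Ici_self)
    have hSne : S.Nonempty := by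
      have := intermediate_value_Icc' ht₁ hcont1
      have h0mem : (0:ℝ) ∈ u '' Icc 0 t₁ := this ⟨hle, le_of_lt hu0⟩
      obtain ⟨s, hs, hus⟩ := h0mem
      exact ⟨s, hs, by simpa using hus⟩
    have hScl : IsClosed S :=
      hcont1.preimage_isClosed_of_isClosed isClosed_Icc isClosed_singleton
    have hSbd : BddBelow S := ⟨0, fun s hs => hs.1.1⟩
    set t₀ := sInf S with ht₀
    have ht₀S : t₀ ∈ S := hScl.csInf_mem hSne hSbd
    have ht₀Icc : t₀ ∈ Icc 0 t₁ := ht₀S.1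
    have hut₀ : u t₀ = 0 := by simpa using ht₀S.2
    have ht₀pos : 0 < t₀ := by
      rcases lt_or_eq_of_le ht₀Icc.1 with h | h
      · exact h
      · exfalso; rw [← h] at hut₀; linarith
    -- u > 0 on [0, t₀)
    have hpos' : ∀ s ∈ Ico (0:ℝ) t₀, 0 < u s := by
      intro s hs
      by_contra hsle
      push_neg at hsle
      have hcont2 : ContinuousOn u (Icc 0 s) :=
        hcont.mono (Icc_subset_Ici_self)
      have := intermediate_value_Icc' hs.1 hcont2
      have h0mem : (0:ℝ) ∈ u '' Icc 0 s := this ⟨hsle, le_of_lt hu0⟩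
      obtain ⟨r, hr, hur⟩ := h0mem
      have hrS : r ∈ S := ⟨⟨hr.1, le_trans hr.2 (le_trans (le_of_lt hs.2) ht₀Icc.2)⟩,
        by simpa using hur⟩
      have : t₀ ≤ r := csInf_le hSbd hrS
      have : r < t₀ := lt_of_le_of_lt hr.2 hs.2
      linarith
    -- derivative of u at t₀ equals ν j - ν i
    have hxij : x t₀ j = x t₀ i := by
      have : x t₀ j - x t₀ i = 0 := hut₀
      linarith
    have hd : HasDerivWithinAt u (ν j - ν i) (Ici 0) t₀ := by
      have := (hD j t₀ ht₀Icc.1).sub (hD i t₀ ht₀Icc.1)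
      have hsum : ∑ k, psiCS β (x t₀ k - x t₀ j) = ∑ k, psiCS β (x t₀ k - x t₀ i) := by
        rw [hxij]
      rw [hsum] at this
      exact this.congr_deriv (by ring)
    have hd' : HasDerivWithinAt u (ν j - ν i) (Icc 0 t₀) t₀ :=
      hd.mono Icc_subset_Ici_self
    rw [hasDerivWithinAt_iff_tendsto_slope] at hd'
    have hdiff : Icc (0:ℝ) t₀ \ {t₀} = Ico 0 t₀ := Icc_sdiff_right
    rw [hdiff] at hd'
    haveI hne : (nhdsWithin t₀ (Ico (0:ℝ) t₀)).NeBot := by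
      rw [← mem_closure_iff_nhdsWithin_neBot, closure_Ico (ne_of_lt ht₀pos)]
      exact ⟨le_of_lt ht₀pos, le_refl _⟩
    have hle0 : ν j - ν i ≤ 0 := by
      refine le_of_tendsto hd' ?_
      filter_upwards [self_mem_nhdsWithin] with s hs
      have hus : 0 < u s := hpos' s hs
      rw [slope_def_field]
      rw [hut₀]
      have hden : s - t₀ < 0 := by linarith [hs.2]
      have : (u s - 0) / (s - t₀) ≤ 0 :=
        div_nonpos_of_nonneg_of_nonpos (by linarith) (le_of_lt hden)
      simpa [div_eq_inv_mul] using this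
    linarith
  constructor
  · intro t ht
    have := hpos t (le_of_lt ht)
    simp only [hu] at this
    intro hEq
    rw [hEq] at this
    linarith
  · intro t ht
    have := hpos t ht
    simp only [hu] at this
    linarith
end

section
/- Let x be a C¹ solution of the first-order singular Cucker–Smale system and let i ≠ j be indices with x_i(0) < x_j(0) and ν_i > ν_j. Then the i-th and j-th particles collide exactly once: there is exactly one t_* ∈ (0, ∞) with x_i(t_*) = x_j(t_*). -/
open Real Filter Set Topology

lemma psiCS_mono {β : ℝ} (hβ : β < 1) : Monotone (psiCS β) := by
  have hp : (0:ℝ) < 1 - β := by linarith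
  have key : Monotone (fun y : ℝ => Real.sign y * |y| ^ (1 - β)) := by
    have pos : ∀ y : ℝ, 0 ≤ y → Real.sign y * |y| ^ (1 - β) = y ^ (1 - β) := by
      intro y hy
      rcases hy.lt_or_eq with h | h
      · rw [Real.sign_of_pos h, abs_of_pos h, one_mul]
      · rw [← h]; simp [Real.zero_rpow hp.ne']
    have neg : ∀ y : ℝ, y ≤ 0 → Real.sign y * |y| ^ (1 - β) = -((-y) ^ (1 - β)) := by
      intro y hy
      rcases hy.lt_or_eq with h | h
      · rw [Real.sign_of_neg h, abs_of_neg h]; ring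
      · rw [h]; simp [Real.zero_rpow hp.ne']
    intro y z hyz
    simp only []
    rcases le_total 0 y with hy | hy
    · rw [pos y hy, pos z (hy.trans hyz)]
      exact Real.rpow_le_rpow hy hyz hp.le
    · rcases le_total 0 z with hz | hz
      · rw [neg y hy, pos z hz]
        have h1 := Real.rpow_nonneg (neg_nonneg.mpr hy) (1 - β)
        have h2 := Real.rpow_nonneg hz (1 - β)
        linarith
      · rw [neg y hy, neg z hz]
        have : (-z) ^ (1 - β) ≤ (-y) ^ (1 - β) :=
          Real.rpow_le_rpow (neg_nonneg.mpr hz) (by linarith) hp.le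
        linarith
  intro y z h
  unfold psiCS
  exact (div_le_div_iff_of_pos_right hp).mpr (key h)

/-- If `ν_i > ν_j` and initially `x_i(0) < x_j(0)`, the two particles collide exactly once. -/
theorem stmt2 (N : ℕ) (hN : 2 ≤ N) (β κ : ℝ) (hβ0 : 0 < β) (hβ1 : β < 1)
    (hκ : 0 < κ) (ν : Fin N → ℝ) (x : ℝ → Fin N → ℝ) (hx : IsCSSol N β κ ν x)
    (i j : Fin N) (hij : i ≠ j) (h0 : x 0 i < x 0 j) (hν : ν j < ν i) :
    ∃! t : ℝ, 0 < t ∧ x t i = x t j := by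
  obtain ⟨hC1, hDrv⟩ := hx
  set c : ℝ := ν i - ν j with hc
  have hcpos : 0 < c := sub_pos.mpr hν
  set u : ℝ → ℝ := fun t => x t j - x t i with hu
  have hNpos : (0:ℝ) < N := by exact_mod_cast Nat.lt_of_lt_of_le (by norm_num) hN
  have hκN : (0:ℝ) ≤ κ / N := le_of_lt (div_pos hκ hNpos)
  set D : ℝ → ℝ := fun t =>
      (ν j + (κ / (N:ℝ)) * ∑ k, psiCS β (x t k - x t j)) -
      (ν i + (κ / (N:ℝ)) * ∑ k, psiCS β (x t k - x t i)) with hDdef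
  have hud : ∀ t ≥ (0:ℝ), HasDerivWithinAt u (D t) (Ici 0) t :=
    fun t ht => (hDrv j t ht).sub (hDrv i t ht)
  have hDle : ∀ t : ℝ, 0 ≤ u t → D t ≤ -c := by
    intro t hut
    have hxij : x t i ≤ x t j := by simpa [hu, sub_nonneg] using hut
    have hsum : ∑ k, psiCS β (x t k - x t j) ≤ ∑ k, psiCS β (x t k - x t i) :=
      Finset.sum_le_sum fun k _ => psiCS_mono hβ1 (by linarith)
    have hmul := mul_le_mul_of_nonneg_left hsum hκN
    simp only [hDdef, hc]
    linarith
  have hDeq : ∀ t : ℝ, u t = 0 → D t = -c := by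
    intro t hut
    have hxij : x t j = x t i := by
      have : x t j - x t i = 0 := hut
      linarith
    simp only [hDdef, hxij, hc]
    ring
  have hucont : ContinuousOn u (Ici 0) :=
    ((hC1 j).continuousOn).sub ((hC1 i).continuousOn)
  have hu0 : 0 < u 0 := sub_pos.mpr h0
  have hud' : ∀ t : ℝ, 0 < t → HasDerivAt u (D t) t :=
    fun t ht => (hud t ht.le).hasDerivAt (Ici_mem_nhds ht)
  -- Existence of a zero
  have hT : ∃ t : ℝ, 0 < t ∧ u t = 0 := by
    set T : ℝ := u 0 / c + 1 with hTdef
    have hTpos : 0 < T := by positivity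
    by_cases hcase : ∀ t ∈ Icc (0:ℝ) T, 0 < u t
    · exfalso
      set g : ℝ → ℝ := fun t => u t + c * t with hg
      have hganti : AntitoneOn g (Icc 0 T) := by
        apply antitoneOn_of_deriv_nonpos (convex_Icc 0 T)
        · exact (hucont.mono (Icc_subset_Ici_self)).add
            (continuous_const.mul continuous_id).continuousOn
        · intro s hs
          rw [interior_Icc] at hs
          exact ((hud' s hs.1).add ((hasDerivAt_id s).const_mul c)).differentiableAt.differentiableWithinAt
        · intro s hs
          rw [interior_Icc] at hs
          have hds : HasDerivAt g (D s + c * 1) s :=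
            (hud' s hs.1).add ((hasDerivAt_id s).const_mul c)
          rw [hds.deriv]
          have := hDle s (hcase s ⟨hs.1.le, hs.2.le⟩).le
          linarith
      have hle := hganti (left_mem_Icc.mpr hTpos.le) (right_mem_Icc.mpr hTpos.le) hTpos.le
      have hcT : c * T = u 0 + c := by
        rw [hTdef, mul_add, mul_one, mul_div_assoc', mul_comm c (u 0), mul_div_assoc, div_self hcpos.ne', mul_one]
      have huT := hcase T (right_mem_Icc.mpr hTpos.le)
      simp only [hg] at hle
      linarith
    · push_neg at hcase
      obtain ⟨t, ht, hut⟩ := hcase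
      have h0t : 0 ≤ t := ht.1
      have hiv : (0:ℝ) ∈ Icc (u t) (u 0) := ⟨hut, hu0.le⟩
      obtain ⟨s, hs, hus⟩ := intermediate_value_Icc' h0t
        (hucont.mono (fun y hy => hy.1)) hiv
      refine ⟨s, ?_, hus⟩
      rcases hs.1.lt_or_eq with h | h
      · exact h
      · exfalso; rw [← h] at hus; linarith
  -- Uniqueness: no two distinct positive zeros
  have key : ∀ t1 t2 : ℝ, 0 < t1 → t1 < t2 → u t1 = 0 → u t2 = 0 → False := by
    intro t1 t2 h1 h12 hz1 hz2
    have d1 : HasDerivAt u (-c) t1 := by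
      have := hud' t1 h1; rwa [hDeq t1 hz1] at this
    have d2 : HasDerivAt u (-c) t2 := by
      have := hud' t2 (h1.trans h12); rwa [hDeq t2 hz2] at this
    -- find a ∈ (t1, t2) with u a < 0
    have hs1 : ∀ᶠ s in 𝓝[>] t1, slope u t1 s < 0 :=
      ((hasDerivAt_iff_tendsto_slope.mp d1).eventually_lt_const
        (by linarith : -c < (0:ℝ))).filter_mono
        (nhdsWithin_mono _ (fun s hs => ne_of_gt hs))
    have hs1' : ∀ᶠ s in 𝓝[>] t1, s < t2 :=
      eventually_nhdsWithin_of_eventually_nhds (eventually_lt_nhds h12)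
    obtain ⟨a, hsa, hat2, hta⟩ :=
      (hs1.and (hs1'.and self_mem_nhdsWithin)).exists
    rw [slope_def_field, hz1, sub_zero] at hsa
    have hta' : t1 < a := hta
    have hua : u a < 0 := by
      have hd : 0 < a - t1 := by linarith
      by_contra h
      push_neg at h
      have : 0 ≤ u a / (a - t1) := div_nonneg h hd.le
      linarith
    -- find b ∈ (a, t2) with u b > 0
    have hs2 : ∀ᶠ s in 𝓝[<] t2, slope u t2 s < 0 :=
      ((hasDerivAt_iff_tendsto_slope.mp d2).eventually_lt_const
        (by linarith : -c < (0:ℝ))).filter_mono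
        (nhdsWithin_mono _ (fun s hs => ne_of_lt hs))
    have hs2' : ∀ᶠ s in 𝓝[<] t2, a < s :=
      eventually_nhdsWithin_of_eventually_nhds (eventually_gt_nhds hat2)
    obtain ⟨b, hsb, hab, hbt2⟩ :=
      (hs2.and (hs2'.and self_mem_nhdsWithin)).exists
    rw [slope_def_field, hz2, sub_zero] at hsb
    have hbt2' : b < t2 := hbt2
    have hub : 0 < u b := by
      have hd : b - t2 < 0 := by linarith
      by_contra h
      push_neg at h
      have : 0 ≤ u b / (b - t2) := by
        rw [div_nonneg_iff]; right; exact ⟨h, hd.le⟩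
      linarith
    have h0a : (0:ℝ) < a := h1.trans hta'
    have hIcc : Icc a b ⊆ Ici (0:ℝ) := fun y hy => le_trans h0a.le hy.1
    -- first zero after a
    set Z : Set ℝ := Icc a b ∩ u ⁻¹' {0} with hZ
    have hZne : Z.Nonempty := by
      obtain ⟨s, hs, hus⟩ := intermediate_value_Icc hab.le (hucont.mono hIcc)
        (⟨hua.le, hub.le⟩ : (0:ℝ) ∈ Icc (u a) (u b))
      exact ⟨s, hs, hus⟩
    have hZclosed : IsClosed Z :=
      (hucont.mono hIcc).preimage_isClosed_of_isClosed isClosed_Icc isClosed_singleton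
    have hZbdd : BddBelow Z := ⟨a, fun y hy => hy.1.1⟩
    set c0 : ℝ := sInf Z with hc0
    have hc0mem : c0 ∈ Z := hZclosed.csInf_mem hZne hZbdd
    have huc0 : u c0 = 0 := hc0mem.2
    have hac0 : a < c0 := by
      rcases hc0mem.1.1.lt_or_eq with h | h
      · exact h
      · exfalso; rw [h] at hua; rw [huc0] at hua; linarith
    have hneg : ∀ s : ℝ, a ≤ s → s < c0 → u s < 0 := by
      intro s hs hsc
      by_contra h
      push_neg at h
      have hsb' : s ≤ b := le_trans hsc.le hc0mem.1.2
      obtain ⟨z, hz, huz⟩ := intermediate_value_Icc hs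
        (hucont.mono (fun y hy => hIcc ⟨hy.1, hy.2.trans hsb'⟩))
        (⟨hua.le, h⟩ : (0:ℝ) ∈ Icc (u a) (u s))
      have : c0 ≤ z := csInf_le hZbdd ⟨⟨hz.1, hz.2.trans hsb'⟩, huz⟩
      linarith [hz.2]
    have d0 : HasDerivAt u (-c) c0 := by
      have := hud' c0 (h0a.trans hac0); rwa [hDeq c0 huc0] at this
    have hslope : Tendsto (slope u c0) (𝓝[<] c0) (𝓝 (-c)) :=
      (hasDerivAt_iff_tendsto_slope.mp d0).mono_left
        (nhdsWithin_mono _ (fun s hs => ne_of_lt hs))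
    have hev : ∀ᶠ s in 𝓝[<] c0, 0 ≤ slope u c0 s := by
      filter_upwards [eventually_nhdsWithin_of_eventually_nhds
        (eventually_gt_nhds hac0), self_mem_nhdsWithin] with s has hsc
      rw [slope_def_field, huc0, sub_zero]
      have h1' : u s < 0 := hneg s has.le hsc
      have h2' : s - c0 < 0 := by simpa [sub_neg] using (hsc : s < c0)
      exact le_of_lt (div_pos_of_neg_of_neg h1' h2')
    have : (0:ℝ) ≤ -c := ge_of_tendsto hslope hev
    linarith
  obtain ⟨t0, ht0pos, ht0⟩ := hT
  refine ⟨t0, ⟨ht0pos, by have h' : x t0 j - x t0 i = 0 := ht0; linarith⟩, ?_⟩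
  rintro y ⟨hy, hxy⟩
  have huy : u y = 0 := by simp [hu, hxy]
  rcases lt_trichotomy y t0 with h | h | h
  · exact absurd (key y t0 hy h huy ht0) (fun f => f)
  · exact h
  · exact absurd (key t0 y ht0pos h ht0 huy) (fun f => f)
end

section
/- Let x be a C¹ solution of the first-order singular Cucker–Smale system. Then finite-time flocking (sticking of all particles) occurs if and only if all natural velocities are identical; precisely: there exists T ≥ 0 such that x_i(t) = x_j(t) for all indices i, j and all t ≥ T, if and only if ν_i = ν_j for all indices i, j. -/
open Real Filter Set Topology

lemma psiCS_neg (β y : ℝ) : psiCS β (-y) = - psiCS β y := by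
  simp [psiCS, Real.sign_neg, abs_neg, neg_div, neg_mul]

lemma mul_psiCS {β : ℝ} (hβ : β < 1) (y : ℝ) :
    y * psiCS β y = |y| ^ (2 - β) / (1 - β) := by
  rcases eq_or_ne y 0 with h | h
  · simp [h, psiCS, Real.zero_rpow (by linarith : (2:ℝ) - β ≠ 0)]
  · have hy : y * Real.sign y = |y| := by
      rcases h.lt_or_gt with hy | hy
      · rw [Real.sign_of_neg hy, abs_of_neg hy]; ring
      · rw [Real.sign_of_pos hy, abs_of_pos hy]; ring
    have habs : (0:ℝ) < |y| := abs_pos.2 h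
    have key : |y| * |y| ^ (1 - β) = |y| ^ (2 - β) := by
      rw [show (2:ℝ) - β = 1 + (1-β) by ring, Real.rpow_add habs, Real.rpow_one]
    calc y * psiCS β y = (y * Real.sign y) * |y| ^ (1-β) / (1-β) := by unfold psiCS; ring
      _ = |y| * |y| ^ (1-β) / (1-β) := by rw [hy]
      _ = |y| ^ (2 - β) / (1-β) := by rw [key]

lemma real_rpow_add_le {a b p : ℝ} (ha : 0 ≤ a) (hb : 0 ≤ b) (hp0 : 0 ≤ p) (hp1 : p ≤ 1) :
    (a + b) ^ p ≤ a ^ p + b ^ p := by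
  lift a to NNReal using ha
  lift b to NNReal using hb
  have := NNReal.rpow_add_le_add_rpow a b hp0 hp1
  exact_mod_cast this

lemma sum_rpow_ge {ι : Type*} (s : Finset ι) (f : ι → ℝ) (hf : ∀ i ∈ s, 0 ≤ f i)
    {p : ℝ} (hp0 : 0 < p) (hp1 : p ≤ 1) : (∑ i ∈ s, f i) ^ p ≤ ∑ i ∈ s, f i ^ p := by
  classical
  induction s using Finset.cons_induction with
  | empty => simp [Real.zero_rpow hp0.ne']
  | cons a s ha ih =>
    rw [Finset.sum_cons, Finset.sum_cons]
    have h1 : (0:ℝ) ≤ f a := hf a (Finset.mem_cons_self _ _)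
    have h2 : (0:ℝ) ≤ ∑ i ∈ s, f i :=
      Finset.sum_nonneg fun i hi => hf i (Finset.mem_cons_of_mem hi)
    calc (f a + ∑ i ∈ s, f i) ^ p ≤ f a ^ p + (∑ i ∈ s, f i) ^ p :=
          real_rpow_add_le h1 h2 hp0.le hp1
      _ ≤ f a ^ p + ∑ i ∈ s, f i ^ p := by
          gcongr
          exact ih fun i hi => hf i (Finset.mem_cons_of_mem hi)

lemma sum_antisymm {N : ℕ} (f : Fin N → Fin N → ℝ) (h : ∀ i j, f i j = - f j i) :
    ∑ i, ∑ j, f i j = 0 := by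
  have h1 : ∑ i, ∑ j, f i j = ∑ i, ∑ j, f j i := Finset.sum_comm
  have h2 : ∑ i : Fin N, ∑ j : Fin N, f j i = - ∑ i : Fin N, ∑ j : Fin N, f i j := by
    rw [← Finset.sum_neg_distrib]
    refine Finset.sum_congr rfl fun i _ => ?_
    rw [← Finset.sum_neg_distrib]
    exact Finset.sum_congr rfl fun j _ => h j i
  linarith

lemma key_id {N : ℕ} (hN : (N:ℝ) ≠ 0) {β : ℝ} (hβ : β < 1) (κ : ℝ)
    (ν : Fin N → ℝ) (hν : ∀ i j, ν i = ν j) (a : Fin N → ℝ) :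
    ∑ i, ∑ j, 2 * (a i - a j) *
      ((ν i + κ / N * ∑ k, psiCS β (a k - a i)) - (ν j + κ / N * ∑ k, psiCS β (a k - a j)))
    = -(2 * κ / (1 - β)) * ∑ i, ∑ j, |a j - a i| ^ (2 - β) := by
  set S : Fin N → ℝ := fun i => ∑ k, psiCS β (a k - a i) with hS
  have h1 : ∑ i, ∑ j, 2 * (a i - a j) *
      ((ν i + κ / N * S i) - (ν j + κ / N * S j))
      = 2 * (κ/N) * ∑ i, ∑ j, (a i - a j) * (S i - S j) := by
    simp only [Finset.mul_sum]
    refine Finset.sum_congr rfl fun i _ => Finset.sum_congr rfl fun j _ => ?_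
    rw [hν i j]
    ring
  have h2 : ∑ i, ∑ j, (a i - a j) * (S i - S j)
      = 2 * ∑ i, ∑ j, (a i - a j) * S i := by
    have h0 : ∑ i, ∑ j, ((a i - a j) * (S i - S j) - 2 * ((a i - a j) * S i)) = 0 := by
      refine sum_antisymm _ fun i j => by ring
    have hsplit : ∑ i, ∑ j, ((a i - a j) * (S i - S j) - 2 * ((a i - a j) * S i))
        = (∑ i, ∑ j, (a i - a j) * (S i - S j)) - 2 * ∑ i, ∑ j, (a i - a j) * S i := by
      rw [Finset.mul_sum, ← Finset.sum_sub_distrib]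
      refine Finset.sum_congr rfl fun i _ => ?_
      rw [Finset.mul_sum, ← Finset.sum_sub_distrib]
    linarith [hsplit ▸ h0]
  have h3 : ∑ i, ∑ j, (a i - a j) * S i
      = (N:ℝ) * (∑ i, a i * S i) - (∑ j, a j) * (∑ i, S i) := by
    have hinner : ∀ i, ∑ j, (a i - a j) * S i = ((N:ℝ) * a i - ∑ j, a j) * S i := by
      intro i
      rw [← Finset.sum_mul]
      congr 1
      rw [Finset.sum_sub_distrib, Finset.sum_const, Finset.card_univ]
      simp [nsmul_eq_mul]
    rw [Finset.sum_congr rfl fun i _ => hinner i]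
    simp only [sub_mul]
    rw [Finset.sum_sub_distrib]
    congr 1
    · rw [Finset.mul_sum]
      exact Finset.sum_congr rfl fun i _ => by ring
    · rw [← Finset.mul_sum]
  have h4 : ∑ i, S i = 0 := by
    simp only [hS]
    refine sum_antisymm (fun i k => psiCS β (a k - a i)) fun i k => ?_
    show psiCS β (a k - a i) = - psiCS β (a i - a k)
    rw [show a k - a i = -(a i - a k) by ring, psiCS_neg]
  have h5 : 2 * ∑ i, a i * S i = -(1/(1-β)) * ∑ i, ∑ j, |a j - a i| ^ (2 - β) := by
    have hc : ∑ i, a i * S i = ∑ i, ∑ k, a k * psiCS β (a i - a k) := by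
      simp only [hS, Finset.mul_sum]
      exact Finset.sum_comm
    have : 2 * ∑ i, a i * S i
        = ∑ i, ∑ k, (a i * psiCS β (a k - a i) + a k * psiCS β (a i - a k)) := by
      rw [two_mul]
      nth_rewrite 2 [hc]
      rw [← Finset.sum_add_distrib]
      refine Finset.sum_congr rfl fun i _ => ?_
      simp only [hS, Finset.mul_sum]
      rw [← Finset.sum_add_distrib]
    rw [this]
    rw [Finset.mul_sum]
    refine Finset.sum_congr rfl fun i _ => ?_
    rw [Finset.mul_sum]
    refine Finset.sum_congr rfl fun k _ => ?_
    rw [show a i - a k = -(a k - a i) by ring, psiCS_neg]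
    have h' : (a i - a k) * psiCS β (a k - a i) = -(|a k - a i| ^ (2-β) / (1-β)) := by
      rw [← mul_psiCS hβ (a k - a i)]; ring
    linear_combination h'
  rw [h1, h2, h3, h4, mul_zero, sub_zero]
  rw [show (N:ℝ) * ∑ i, a i * S i = (N:ℝ)/2 * (2 * ∑ i, a i * S i) by ring, h5]
  have hb : (1:ℝ) - β ≠ 0 := by linarith
  field_simp

/-- Finite-time flocking (sticking of all particles) occurs iff all natural velocities agree. -/
theorem stmt4 (N : ℕ) (hN : 2 ≤ N) (β κ : ℝ) (hβ0 : 0 < β) (hβ1 : β < 1)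
    (hκ : 0 < κ) (ν : Fin N → ℝ) (x : ℝ → Fin N → ℝ) (hx : IsCSSol N β κ ν x) :
    (∃ T ≥ (0:ℝ), ∀ i j : Fin N, ∀ t ≥ T, x t i = x t j) ↔ (∀ i j : Fin N, ν i = ν j) := by
  constructor
  · rintro ⟨T, hT, hflock⟩ i j
    have ht : (0:ℝ) ≤ T + 1 := by linarith
    have h0mem : Ici (0:ℝ) ∈ 𝓝 (T+1) := Ici_mem_nhds (by linarith)
    have hmem : Ici T ∈ 𝓝 (T+1) := Ici_mem_nhds (by linarith)
    have hi := (hx.2 i (T+1) ht).hasDerivAt h0mem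
    have hj := (hx.2 j (T+1) ht).hasDerivAt h0mem
    have heq : (fun s => x s i) =ᶠ[𝓝 (T+1)] fun s => x s j :=
      Filter.eventuallyEq_of_mem hmem fun s hs => hflock i j s hs
    have hj' := hj.congr_of_eventuallyEq heq
    have huniq := hi.unique hj'
    have hxx : x (T+1) i = x (T+1) j := hflock i j (T+1) (by linarith)
    rw [hxx] at huniq
    exact add_right_cancel huniq
  · intro hν
    have hNne : (N:ℝ) ≠ 0 := by positivity
    have hb : (0:ℝ) < 1 - β := by linarith
    set q : ℝ := (2 - β)/2 with hq
    set r : ℝ := β/2 with hr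
    set c₁ : ℝ := 2*κ/(1-β) with hc₁def
    have hc₁ : 0 < c₁ := by positivity
    set c₂ : ℝ := r * c₁ with hc₂def
    have hc₂ : 0 < c₂ := by positivity
    set V : ℝ → ℝ := fun t => ∑ i, ∑ j, (x t i - x t j)^2 with hV
    set g : ℝ → ℝ := fun t => -c₁ * ∑ i, ∑ j, |x t j - x t i| ^ (2-β) with hg
    have hVnonneg : ∀ t, 0 ≤ V t := fun t =>
      Finset.sum_nonneg fun i _ => Finset.sum_nonneg fun j _ => sq_nonneg _
    -- derivative of V
    have hVd : ∀ t ≥ (0:ℝ), HasDerivWithinAt V (g t) (Ici 0) t := by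
      intro t ht
      have hder : HasDerivWithinAt V
          (∑ i, ∑ j, (2:ℝ) * (x t i - x t j) ^ 1 *
            ((ν i + (κ / (N:ℝ)) * ∑ k, psiCS β (x t k - x t i)) -
             (ν j + (κ / (N:ℝ)) * ∑ k, psiCS β (x t k - x t j)))) (Ici 0) t := by
        refine HasDerivWithinAt.fun_sum fun i _ => HasDerivWithinAt.fun_sum fun j _ => ?_
        have := ((hx.2 i t ht).sub (hx.2 j t ht)).pow 2
        norm_num at this ⊢
        exact this
      have heq : (∑ i, ∑ j, (2:ℝ) * (x t i - x t j) ^ 1 *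
            ((ν i + (κ / (N:ℝ)) * ∑ k, psiCS β (x t k - x t i)) -
             (ν j + (κ / (N:ℝ)) * ∑ k, psiCS β (x t k - x t j)))) = g t := by
        simp only [pow_one]
        rw [key_id hNne hβ1 κ ν hν (x t)]
      exact heq ▸ hder
    have hVcont : ContinuousOn V (Ici 0) := fun t ht => (hVd t ht).continuousWithinAt
    -- lower bound for the dissipation
    have hq0 : 0 < q := by rw [hq]; linarith
    have hq1 : q ≤ 1 := by rw [hq]; linarith
    have hsum_ge : ∀ t, (V t) ^ q ≤ ∑ i, ∑ j, |x t j - x t i| ^ (2-β) := by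
      intro t
      have step1 : (V t) ^ q ≤ ∑ i, (∑ j, (x t i - x t j)^2) ^ q :=
        sum_rpow_ge _ _ (fun i _ => Finset.sum_nonneg fun j _ => sq_nonneg _) hq0 hq1
      have step2 : ∀ i : Fin N, (∑ j, (x t i - x t j)^2) ^ q ≤ ∑ j, ((x t i - x t j)^2) ^ q :=
        fun i => sum_rpow_ge _ _ (fun j _ => sq_nonneg _) hq0 hq1
      have step3 : ∀ i j : Fin N, ((x t i - x t j)^2 : ℝ) ^ q = |x t j - x t i| ^ (2-β) := by
        intro i j
        rw [← sq_abs, ← Real.rpow_natCast |x t i - x t j| 2, ← Real.rpow_mul (abs_nonneg _),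
          abs_sub_comm]
        congr 1
        rw [hq]; push_cast; ring
      calc (V t) ^ q ≤ ∑ i, (∑ j, (x t i - x t j)^2) ^ q := step1
        _ ≤ ∑ i, ∑ j, ((x t i - x t j)^2) ^ q := Finset.sum_le_sum fun i _ => step2 i
        _ = ∑ i, ∑ j, |x t j - x t i| ^ (2-β) := by
            exact Finset.sum_congr rfl fun i _ => Finset.sum_congr rfl fun j _ => step3 i j
    have hg_le : ∀ t, g t ≤ -c₁ * (V t) ^ q := by
      intro t
      simp only [hg]
      have h1 : c₁ * (V t) ^ q ≤ c₁ * ∑ i, ∑ j, |x t j - x t i| ^ (2-β) := by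
        have := hsum_ge t
        nlinarith
      nlinarith
    have hg_nonpos : ∀ t, g t ≤ 0 := by
      intro t
      have h1 : (0:ℝ) ≤ ∑ i, ∑ j, |x t j - x t i| ^ (2-β) :=
        Finset.sum_nonneg fun i _ => Finset.sum_nonneg fun j _ =>
          Real.rpow_nonneg (abs_nonneg _) _
      simp only [hg]
      nlinarith
    -- existence of a zero of V in finite time
    set T0 : ℝ := (V 0) ^ r / c₂ with hT0def
    have hT0 : 0 ≤ T0 := div_nonneg (Real.rpow_nonneg (hVnonneg 0) r) hc₂.le
    have hzero : ∃ t0 ∈ Icc (0:ℝ) (T0+1), V t0 = 0 := by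
      by_contra hcon
      push_neg at hcon
      have hpos : ∀ t ∈ Icc (0:ℝ) (T0+1), 0 < V t := fun t ht =>
        lt_of_le_of_ne (hVnonneg t) (Ne.symm (hcon t ht))
      set h : ℝ → ℝ := fun t => (V t) ^ r + c₂ * t with hh
      have hderivAt : ∀ t ∈ Ioo (0:ℝ) (T0+1),
          HasDerivAt h (r * (V t) ^ (r-1) * g t + c₂) t := by
        intro t ht
        have htpos : 0 < t := ht.1
        have hVt : HasDerivAt V (g t) t := (hVd t htpos.le).hasDerivAt (Ici_mem_nhds htpos)
        have hVne : V t ≠ 0 := (hpos t (Ioo_subset_Icc_self ht)).ne'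
        have hrp : HasDerivAt (fun y : ℝ => y ^ r) (r * (V t)^(r-1)) (V t) :=
          Real.hasDerivAt_rpow_const (Or.inl hVne)
        have comp := hrp.comp t hVt
        have hlin : HasDerivAt (fun s : ℝ => c₂ * s) c₂ t := by
          simpa using (hasDerivAt_id t).const_mul c₂
        exact comp.add hlin
      have hanti : AntitoneOn h (Icc 0 (T0+1)) := by
        apply antitoneOn_of_deriv_nonpos (convex_Icc _ _)
        · apply ContinuousOn.add
          · exact ContinuousOn.rpow_const (hVcont.mono Icc_subset_Ici_self)
              (fun t ht => Or.inl (hcon t ht))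
          · exact (continuous_const.mul continuous_id).continuousOn
        · rw [interior_Icc]
          exact fun t ht => (hderivAt t ht).differentiableAt.differentiableWithinAt
        · rw [interior_Icc]
          intro t ht
          rw [(hderivAt t ht).deriv]
          have hVpos : 0 < V t := hpos t (Ioo_subset_Icc_self ht)
          have hfac : 0 ≤ r * (V t) ^ (r-1) := by positivity
          have h1 : r * (V t) ^ (r-1) * g t ≤ r * (V t) ^ (r-1) * (-c₁ * (V t) ^ q) :=
            mul_le_mul_of_nonneg_left (hg_le t) hfac
          have h2 : (V t) ^ (r-1) * (V t) ^ q = 1 := by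
            rw [← Real.rpow_add hVpos]
            rw [show r - 1 + q = 0 by rw [hr, hq]; ring, Real.rpow_zero]
          have h3 : r * (V t) ^ (r-1) * (-c₁ * (V t) ^ q) = -c₂ := by
            rw [hc₂def]
            calc r * (V t) ^ (r-1) * (-c₁ * (V t) ^ q)
              = -(r * c₁) * ((V t) ^ (r-1) * (V t) ^ q) := by ring
              _ = -(r * c₁) := by rw [h2, mul_one]
          linarith [h1, h3 ▸ h1]
      have hm0 : (0:ℝ) ∈ Icc (0:ℝ) (T0+1) := ⟨le_refl _, by linarith⟩
      have hm1 : T0+1 ∈ Icc (0:ℝ) (T0+1) := ⟨by linarith, le_refl _⟩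
      have hle := hanti hm0 hm1 (by linarith)
      have hVr : 0 ≤ (V (T0+1)) ^ r := Real.rpow_nonneg (hVnonneg _) r
      have hT0eq : c₂ * T0 = (V 0) ^ r := by
        rw [hT0def]; field_simp
      simp only [hh] at hle
      -- hle : V (T0+1) ^ r + c₂ * (T0+1) ≤ V 0 ^ r + c₂ * 0
      nlinarith
    obtain ⟨t0, ht0mem, ht0⟩ := hzero
    have ht0nonneg : (0:ℝ) ≤ t0 := ht0mem.1
    have hanti2 : AntitoneOn V (Ici t0) := by
      apply antitoneOn_of_deriv_nonpos (convex_Ici t0)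
      · exact hVcont.mono (Ici_subset_Ici.2 ht0nonneg)
      · rw [interior_Ici]
        intro t ht
        have htp : 0 < t := lt_of_le_of_lt ht0nonneg ht
        exact ((hVd t htp.le).hasDerivAt (Ici_mem_nhds htp)).differentiableAt.differentiableWithinAt
      · rw [interior_Ici]
        intro t ht
        have htp : 0 < t := lt_of_le_of_lt ht0nonneg ht
        rw [((hVd t htp.le).hasDerivAt (Ici_mem_nhds htp)).deriv]
        exact hg_nonpos t
    refine ⟨t0, ht0nonneg, fun i j t hts => ?_⟩
    have hVt0 : V t = 0 := by
      have h1 : V t ≤ V t0 := hanti2 (self_mem_Ici) hts hts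
      have h2 : V t ≤ 0 := ht0 ▸ h1
      exact le_antisymm h2 (hVnonneg t)
    have hinner : ∑ j', (x t i - x t j')^2 = 0 := by
      have := (Finset.sum_eq_zero_iff_of_nonneg
        (fun i' (_ : i' ∈ Finset.univ) => Finset.sum_nonneg fun j' _ => sq_nonneg
          (x t i' - x t j'))).1 hVt0 i (Finset.mem_univ i)
      exact this
    have hterm : (x t i - x t j)^2 = 0 :=
      (Finset.sum_eq_zero_iff_of_nonneg
        (fun j' (_ : j' ∈ Finset.univ) => sq_nonneg _)).1 hinner j (Finset.mem_univ j)
    have := pow_eq_zero_iff (two_ne_zero) |>.1 hterm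
    linarith [sub_eq_zero.1 this]
end
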